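/- arXiv:2305.03412 — 6 statements merged into one kernel-verified Lean document; each statement's English description precedes it below -/
import Mathlib

section
/- Let G be a d-connected graph and let S and T be d-separators of G (i.e., vertex sets of size d whose removal disconnects G). Then the following are equivalent: (a) S contains vertices from at least two components of G−T; (b) T contains a vertex from each component of G−S; (c) T contains vertices from at least two components of G−S; (d) S contains a vertex from each component of G−T. -/
variable {V : Type*}

/-- `u` and `v` lie in the same component of `G − S`. -/
def ReachOutside (G : SimpleGraph V) (S : Set V) (u v : V) : Prop :=
  ∃ (hu : u ∈ Sᶜ) (hv : v ∈ Sᶜ), (G.induce Sᶜ).Reachable ⟨u, hu⟩ ⟨v, hv⟩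

/-- `S` is a separator of `G`: `G − S` is disconnected. -/
def IsSeparator (G : SimpleGraph V) (S : Set V) : Prop :=
  ∃ u v, u ∉ S ∧ v ∉ S ∧ ¬ ReachOutside G S u v

/-- `S` is a `d`-separator of `G`. -/
def IsdSeparator (G : SimpleGraph V) (d : ℕ) (S : Set V) : Prop :=
  S.ncard = d ∧ IsSeparator G S

/-- `S` separates `u` from `v` in `G`. -/
def SeparatesPair (G : SimpleGraph V) (S : Set V) (u v : V) : Prop :=
  u ∉ S ∧ v ∉ S ∧ ¬ ReachOutside G S u v

/-- `S` crosses `T`: `S` contains vertices of at least two components of `G − T`. -/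
def Crosses (G : SimpleGraph V) (S T : Set V) : Prop :=
  ∃ s₁ s₂, s₁ ∈ S ∧ s₂ ∈ S ∧ s₁ ∉ T ∧ s₂ ∉ T ∧ ¬ ReachOutside G T s₁ s₂

def Noncrossing (G : SimpleGraph V) (S T : Set V) : Prop :=
  ¬ Crosses G S T ∧ ¬ Crosses G T S

/-- `G` is `d`-connected. -/
def dConnected [Fintype V] (G : SimpleGraph V) (d : ℕ) : Prop :=
  d + 1 ≤ Fintype.card V ∧ ∀ S : Set V, S.ncard < d → ¬ IsSeparator G S

/-- the neighbours of `X` outside `X`. -/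
def nbhd (G : SimpleGraph V) (X : Set V) : Set V :=
  {v | v ∉ X ∧ ∃ x ∈ X, G.Adj x v}

/-- the complement `V − X − N_G(X)` of a fragment. -/
def fragCompl (G : SimpleGraph V) (X : Set V) : Set V :=
  (X ∪ nbhd G X)ᶜ

/-- `X` is a `d`-fragment of `G`. -/
def IsFragment (G : SimpleGraph V) (d : ℕ) (X : Set V) : Prop :=
  X.Nonempty ∧ (nbhd G X).ncard = d ∧ (fragCompl G X).Nonempty

/-- the fragment `X` is `(u,v)`-separating. -/
def FragSeparates (G : SimpleGraph V) (X : Set V) (u v : V) : Prop :=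
  (u ∈ X ∧ v ∈ fragCompl G X) ∨ (v ∈ X ∧ u ∈ fragCompl G X)

/-- there exist `k` pairwise internally disjoint `u`–`v` paths in `G`. -/
def HasIntDisjPaths (G : SimpleGraph V) (u v : V) (k : ℕ) : Prop :=
  ∃ f : Fin k → G.Path u v, Function.Injective f ∧
    ∀ i j, i ≠ j → ∀ x, x ∈ (f i).1.support → x ∈ (f j).1.support → x = u ∨ x = v

/-- `κ(G,u,v)`: the maximum number of pairwise internally disjoint `u`–`v` paths. -/
noncomputable def localConn (G : SimpleGraph V) (u v : V) : ℕ :=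
  sSup {k | HasIntDisjPaths G u v k}

lemma reach_refl (G : SimpleGraph V) {S : Set V} {u : V} (hu : u ∉ S) : ReachOutside G S u u :=
  ⟨hu, hu, SimpleGraph.Reachable.refl _⟩

lemma reach_symm (G : SimpleGraph V) {S : Set V} {u v : V} (h : ReachOutside G S u v) :
    ReachOutside G S v u := by
  obtain ⟨hu, hv, h⟩ := h; exact ⟨hv, hu, h.symm⟩

lemma reach_trans (G : SimpleGraph V) {S : Set V} {u v w : V} (h1 : ReachOutside G S u v)
    (h2 : ReachOutside G S v w) : ReachOutside G S u w := by
  obtain ⟨hu, hv, h1⟩ := h1; obtain ⟨hv', hw, h2⟩ := h2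
  exact ⟨hu, hw, h1.trans h2⟩

lemma reach_step (G : SimpleGraph V) {S : Set V} {u v w : V} (h : ReachOutside G S u v)
    (hw : w ∉ S) (hadj : G.Adj v w) : ReachOutside G S u w := by
  obtain ⟨hu, hv, h⟩ := h
  exact ⟨hu, hw, h.trans (SimpleGraph.Adj.reachable (by exact hadj :
    (G.induce Sᶜ).Adj ⟨v, hv⟩ ⟨w, hw⟩))⟩

lemma reach_transfer (G : SimpleGraph V) {S T : Set V} {a b : V} (h : ReachOutside G S a b)
    (hC : ∀ x, ReachOutside G S a x → x ∉ T) : ReachOutside G T a b := by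
  obtain ⟨ha, hb, ⟨p⟩⟩ := h
  suffices H : ∀ (x z : ↥Sᶜ), SimpleGraph.Walk (G.induce Sᶜ) x z →
      ReachOutside G S a (x : V) → ReachOutside G T (x : V) (z : V) by
    exact H ⟨a, ha⟩ ⟨b, hb⟩ p (reach_refl G ha)
  intro x z p
  induction p with
  | nil => intro hax; exact reach_refl G (hC _ hax)
  | @cons x y _ hxy q ih =>
    intro hax
    have hay : ReachOutside G S a (y : V) := reach_step G hax y.2 hxy
    exact reach_trans G ⟨hC x hax, hC y hay, SimpleGraph.Adj.reachable hxy⟩ (ih hay)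

lemma reach_closed (G : SimpleGraph V) {A C : Set V} {a b : V} (h : ReachOutside G A a b)
    (haC : a ∈ C) (hcl : ∀ x y, x ∈ C → y ∉ A → G.Adj x y → y ∈ C) : b ∈ C := by
  obtain ⟨ha, hb, ⟨p⟩⟩ := h
  suffices H : ∀ (x z : ↥Aᶜ), SimpleGraph.Walk (G.induce Aᶜ) x z → (x : V) ∈ C → (z : V) ∈ C by
    exact H ⟨a, ha⟩ ⟨b, hb⟩ p haC
  intro x z p
  induction p with
  | nil => intro h; exact h
  | @cons x y _ hxy q ih => intro hx; exact ih (hcl x y hx y.2 hxy)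

lemma meets_imp_crosses (G : SimpleGraph V) {S T : Set V} (hSsep : IsSeparator G S)
    (hmeet : ∀ w, w ∉ S → ∃ t ∈ T, t ∉ S ∧ ReachOutside G S t w) : Crosses G T S := by
  obtain ⟨u, v, hu, hv, huv⟩ := hSsep
  obtain ⟨t₁, ht₁T, ht₁S, h₁⟩ := hmeet u hu
  obtain ⟨t₂, ht₂T, ht₂S, h₂⟩ := hmeet v hv
  refine ⟨t₁, t₂, ht₁T, ht₂T, ht₁S, ht₂S, fun h => huv ?_⟩
  exact reach_trans G (reach_trans G (reach_symm G h₁) h) h₂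


lemma crosses_imp_meets [Fintype V] (G : SimpleGraph V) (d : ℕ) (hG : dConnected G d)
    (S T : Set V) (hS : IsdSeparator G d S) (hT : IsdSeparator G d T)
    (hcr : Crosses G S T) : ∀ w, w ∉ S → ∃ t ∈ T, t ∉ S ∧ ReachOutside G S t w := by
  intro w hw
  by_contra hcon
  push_neg at hcon
  obtain ⟨s₁, s₂, hs₁S, hs₂S, hs₁T, hs₂T, hsep⟩ := hcr
  set C : Set V := {v | ReachOutside G S v w} with hCdef
  have hwC : w ∈ C := reach_refl G hw
  have hCS : ∀ v ∈ C, v ∉ S := fun v hv => hv.1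
  have hCT : ∀ v ∈ C, v ∉ T := by
    intro v hv hvT
    exact hcon v hvT (hCS v hv) hv
  -- C is closed under adjacency outside S
  have hCcl : ∀ x y, x ∈ C → y ∉ S → G.Adj x y → y ∈ C := by
    intro x y hx hyS hadj
    exact reach_symm G (reach_step G (reach_symm G hx) hyS hadj)
  -- nbhd of C is contained in S
  have hNS : nbhd G C ⊆ S := by
    intro y hy
    by_contra hyS
    obtain ⟨hyC, x, hxC, hadj⟩ := hy
    exact hyC (hCcl x y hxC hyS hadj)
  -- a vertex outside C ∪ S
  obtain ⟨u, v, hu, hv, huv⟩ := hS.2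
  have hone : u ∉ C ∨ v ∉ C := by
    by_contra h
    push_neg at h
    exact huv (reach_trans G h.1 (reach_symm G h.2))
  obtain ⟨u₀, hu₀S, hu₀C⟩ : ∃ u₀, u₀ ∉ S ∧ u₀ ∉ C := by
    rcases hone with h | h
    · exact ⟨u, hu, h⟩
    · exact ⟨v, hv, h⟩
  -- nbhd G C separates w from u₀
  have hsepN : IsSeparator G (nbhd G C) := by
    refine ⟨w, u₀, fun h => h.1 hwC, fun h => hu₀S (hNS h), fun h => hu₀C ?_⟩
    refine reach_closed G h hwC ?_
    intro x y hx hyN hadj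
    by_contra hyC
    exact hyN ⟨hyC, x, hx, hadj⟩
  -- hence nbhd G C = S
  have hNcard : ¬ (nbhd G C).ncard < d := fun h => hG.2 _ h hsepN
  have hNeq : nbhd G C = S := by
    apply Set.eq_of_subset_of_ncard_le hNS
    rw [hS.1]; omega
  -- s₁ and s₂ both have neighbours in C
  have hnb : ∀ s ∈ S, ∃ x ∈ C, G.Adj s x := by
    intro s hs
    rw [← hNeq] at hs
    obtain ⟨-, x, hxC, hadj⟩ := hs
    exact ⟨x, hxC, hadj.symm⟩
  obtain ⟨x₁, hx₁C, hadj₁⟩ := hnb s₁ hs₁S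
  obtain ⟨x₂, hx₂C, hadj₂⟩ := hnb s₂ hs₂S
  -- x₁ and x₂ connected outside S, hence outside T
  have hx12 : ReachOutside G S x₁ x₂ := reach_trans G hx₁C (reach_symm G hx₂C)
  have hx12T : ReachOutside G T x₁ x₂ := by
    refine reach_transfer G hx12 ?_
    intro x hx
    exact hCT x (reach_trans G (reach_symm G hx) hx₁C)
  exact hsep (reach_step G (reach_trans G ⟨hs₁T, hCT x₁ hx₁C, SimpleGraph.Adj.reachable
    (by exact hadj₁ : (G.induce Tᶜ).Adj ⟨s₁, hs₁T⟩ ⟨x₁, hCT x₁ hx₁C⟩)⟩ hx12T) hs₂T hadj₂.symm)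

theorem stmt0 [Fintype V] (G : SimpleGraph V) (d : ℕ) (hG : dConnected G d)
    (S T : Set V) (hS : IsdSeparator G d S) (hT : IsdSeparator G d T) :
    (Crosses G S T ↔ (∀ w, w ∉ S → ∃ t ∈ T, t ∉ S ∧ ReachOutside G S t w)) ∧
    (Crosses G S T ↔ Crosses G T S) ∧
    (Crosses G S T ↔ (∀ w, w ∉ T → ∃ s ∈ S, s ∉ T ∧ ReachOutside G T s w)) := by
  have ab : Crosses G S T → (∀ w, w ∉ S → ∃ t ∈ T, t ∉ S ∧ ReachOutside G S t w) :=
    crosses_imp_meets G d hG S T hS hT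
  have bc : (∀ w, w ∉ S → ∃ t ∈ T, t ∉ S ∧ ReachOutside G S t w) → Crosses G T S :=
    meets_imp_crosses G hS.2
  have cd : Crosses G T S → (∀ w, w ∉ T → ∃ s ∈ S, s ∉ T ∧ ReachOutside G T s w) :=
    crosses_imp_meets G d hG T S hT hS
  have da : (∀ w, w ∉ T → ∃ s ∈ S, s ∉ T ∧ ReachOutside G T s w) → Crosses G S T :=
    meets_imp_crosses G hT.2
  refine ⟨⟨ab, fun h => da (cd (bc h))⟩, ⟨fun h => bc (ab h), fun h => da (cd h)⟩,
    ⟨fun h => cd (bc (ab h)), da⟩⟩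
end

section
/- Let G be a d-connected graph, let u, v, x be vertices, and let X and X′ be noncrossing d-fragments of G with x ∈ N_G(X). If X is (u,v)-separating and X′ is (u,x)-separating, then X′ is also (u,v)-separating. -/
variable {V : Type*}

lemma reach_stay {G : SimpleGraph V} {S A : Set V}
    (hA : ∀ z ∈ A, ∀ y, G.Adj z y → y ∈ A ∪ S) {a b : V}
    (h : ReachOutside G S a b) (ha : a ∈ A) : b ∈ A := by
  obtain ⟨hu, hv, ⟨w⟩⟩ := h
  have key : ∀ (s t : {x // x ∈ Sᶜ}) (p : (G.induce Sᶜ).Walk s t), s.1 ∈ A → t.1 ∈ A := by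
    intro s t p
    induction p with
    | nil => exact id
    | @cons s' c' t' hadj p ih =>
      intro hs
      apply ih
      have hadj' : G.Adj s'.1 c'.1 := hadj
      rcases hA _ hs _ hadj' with h | h
      · exact h
      · exact absurd h c'.2
  exact key _ _ w ha

lemma side_X (G : SimpleGraph V) (X : Set V) :
    ∀ z ∈ X, ∀ y, G.Adj z y → y ∈ X ∪ nbhd G X := by
  intro z hz y hadj
  by_cases hy : y ∈ X
  · exact Or.inl hy
  · exact Or.inr ⟨hy, z, hz, hadj⟩

lemma side_C (G : SimpleGraph V) (X : Set V) :
    ∀ z ∈ fragCompl G X, ∀ y, G.Adj z y → y ∈ fragCompl G X ∪ nbhd G X := by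
  intro z hz y hadj
  by_cases hy : y ∈ fragCompl G X
  · exact Or.inl hy
  · rcases (not_not.1 (fun h => hy h) : y ∈ X ∪ nbhd G X) with hy' | hy'
    · exact absurd (Or.inr ⟨fun hzX => hz (Or.inl hzX), y, hy', hadj.symm⟩ : z ∈ X ∪ nbhd G X) hz
    · exact Or.inr hy'

lemma X_nbhd_disj (G : SimpleGraph V) (X : Set V) : ∀ y ∈ nbhd G X, y ∉ X := fun _ h => h.1
lemma C_disj (G : SimpleGraph V) (X : Set V) : ∀ y ∈ fragCompl G X, y ∉ X ∧ y ∉ nbhd G X :=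
  fun y h => ⟨fun h' => h (Or.inl h'), fun h' => h (Or.inr h')⟩

/-- the "corner" argument: a small separator contradiction. -/
lemma corner [Fintype V] {G : SimpleGraph V} {d : ℕ} (hG : dConnected G d)
    {A B S T : Set V} {w x : V}
    (hA : ∀ z ∈ A, ∀ y, G.Adj z y → y ∈ A ∪ S)
    (hB : ∀ z ∈ B, ∀ y, G.Adj z y → y ∈ B ∪ T)
    (hSB : ∀ y ∈ S, y ∉ B) (hTA : ∀ y ∈ T, y ∉ A)
    (hwA : w ∈ A) (hwB : w ∈ B) (hxS : x ∈ S) (hxT : x ∉ T) (hxA : x ∉ A)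
    (hScard : S.ncard = d) : False := by
  set S0 := S ∩ T with hS0
  have hside : ∀ z ∈ A ∩ B, ∀ y, G.Adj z y → y ∈ (A ∩ B) ∪ S0 := by
    intro z hz y hadj
    rcases hA z hz.1 y hadj with h1 | h1 <;> rcases hB z hz.2 y hadj with h2 | h2
    · exact Or.inl ⟨h1, h2⟩
    · exact absurd h1 (hTA y h2)
    · exact absurd h2 (hSB y h1)
    · exact Or.inr ⟨h1, h2⟩
  have hwS0 : w ∉ S0 := fun h => hSB w h.1 hwB
  have hxS0 : x ∉ S0 := fun h => hxT h.2
  have hnr : ¬ ReachOutside G S0 w x := by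
    intro h
    exact hxA (reach_stay hside h ⟨hwA, hwB⟩).1
  have hsep : IsSeparator G S0 := ⟨w, x, hwS0, hxS0, hnr⟩
  have hcard : S0.ncard < d := by
    have hss : S0 ⊂ S := by
      constructor
      · exact Set.inter_subset_left
      · intro h
        exact hxT (h hxS).2
    have := Set.ncard_lt_ncard hss (Set.toFinite S)
    omega
  exact hG.2 S0 hcard hsep

theorem stmt3 [Fintype V] (G : SimpleGraph V) (d : ℕ) (hG : dConnected G d) (u v x : V)
    (X X' : Set V) (hX : IsFragment G d X) (hX' : IsFragment G d X')
    (hnc : Noncrossing G (nbhd G X) (nbhd G X'))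
    (hx : x ∈ nbhd G X)
    (huv : FragSeparates G X u v) (hux : FragSeparates G X' u x) :
    FragSeparates G X' u v := by
  set N := nbhd G X with hN
  set N' := nbhd G X' with hN'
  set C := fragCompl G X with hC
  set C' := fragCompl G X' with hC'
  -- noncrossing, unpacked
  have h1 : ∀ s₁ s₂, s₁ ∈ N → s₂ ∈ N → s₁ ∉ N' → s₂ ∉ N' → ReachOutside G N' s₁ s₂ := by
    intro s₁ s₂ a b c e
    by_contra hr
    exact hnc.1 ⟨s₁, s₂, a, b, c, e, hr⟩
  have h2 : ∀ s₁ s₂, s₁ ∈ N' → s₂ ∈ N' → s₁ ∉ N → s₂ ∉ N → ReachOutside G N s₁ s₂ := by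
    intro s₁ s₂ a b c e
    by_contra hr
    exact hnc.2 ⟨s₁, s₂, a, b, c, e, hr⟩
  have hxN' : x ∉ N' := by
    rcases hux with ⟨_, hx'⟩ | ⟨hx', _⟩
    · exact (C_disj G X' x hx').2
    · exact fun h => h.1 hx'
  -- N' \ N is nonempty
  have hne : ∃ s₀, s₀ ∈ N' ∧ s₀ ∉ N := by
    by_contra h
    push_neg at h
    have hsub : N' ⊆ N := h
    have : N' = N := Set.eq_of_subset_of_ncard_le hsub (by rw [hX.2.1, hX'.2.1]) (Set.toFinite N)
    exact hxN' (this ▸ hx)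
  obtain ⟨s₀, hs₀N', hs₀N⟩ := hne
  -- dichotomy for N' \ N
  have hdich : (∀ s ∈ N', s ∉ N → s ∈ X) ∨ (∀ s ∈ N', s ∉ N → s ∈ C) := by
    have hs₀ : s₀ ∈ X ∨ s₀ ∈ C := by
      by_cases h : s₀ ∈ X
      · exact Or.inl h
      · exact Or.inr (fun hc => (not_or.2 ⟨h, hs₀N⟩) hc)
    rcases hs₀ with h | h
    · exact Or.inl (fun s hs hsN => reach_stay (side_X G X) (h2 s₀ s hs₀N' hs hs₀N hsN) h)
    · exact Or.inr (fun s hs hsN => reach_stay (side_C G X) (h2 s₀ s hs₀N' hs hs₀N hsN) h)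
  rcases hux with ⟨huX', hxC'⟩ | ⟨hxX', huC'⟩
  · -- u ∈ X', x ∈ C'
    have hNsub : ∀ s ∈ N, s ∉ N' → s ∈ C' :=
      fun s hs hsN' => reach_stay (side_C G X') (h1 x s hx hs hxN' hsN') hxC'
    have hNX' : ∀ s ∈ N, s ∉ X' := by
      intro s hs hsX'
      exact (C_disj G X' s (hNsub s hs (X_nbhd_disj G X' s · hsX'))).1 hsX'
    rcases hdich with hd | hd
    · -- N' \ N ⊆ X, so N' ∩ C = ∅
      have hN'C : ∀ s ∈ N', s ∉ C := by
        intro s hs hsC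
        exact (C_disj G X s hsC).2 (by_contra fun h => (C_disj G X s hsC).1 (hd s hs (fun hh => (C_disj G X s hsC).2 hh)))
      rcases huv with ⟨huX, hvC⟩ | ⟨hvX, huC⟩
      · -- u ∈ X, v ∈ C: show v ∈ C'
        left
        refine ⟨huX', ?_⟩
        have hvX' : v ∉ X' := fun hvX' =>
          corner hG (side_C G X) (side_X G X') hNX' hN'C hvC hvX' hx hxN' (fun hc => (C_disj G X x hc).2 hx) hX.2.1
        have hvN' : v ∉ N' := fun h => hN'C v h hvC
        exact fun h => (h.elim hvX' hvN')
      · -- u ∈ C ∩ X': corner contradiction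
        exact absurd (corner hG (side_C G X) (side_X G X') hNX' hN'C huC huX' hx hxN'
          (fun hc => (C_disj G X x hc).2 hx) hX.2.1) not_false
    · -- N' \ N ⊆ C, so N' ∩ X = ∅
      have hN'X : ∀ s ∈ N', s ∉ X := by
        intro s hs hsX
        exact (C_disj G X s (hd s hs (X_nbhd_disj G X s · hsX))).1 hsX
      rcases huv with ⟨huX, hvC⟩ | ⟨hvX, huC⟩
      · -- u ∈ X ∩ X': corner contradiction
        exact absurd (corner hG (side_X G X) (side_X G X') hNX' hN'X huX huX' hx hxN'
          (X_nbhd_disj G X x hx) hX.2.1) not_false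
      · -- v ∈ X: show v ∈ C'
        left
        refine ⟨huX', ?_⟩
        have hvX' : v ∉ X' := fun hvX' =>
          corner hG (side_X G X) (side_X G X') hNX' hN'X hvX hvX' hx hxN' (X_nbhd_disj G X x hx) hX.2.1
        have hvN' : v ∉ N' := fun h => hN'X v h hvX
        exact fun h => (h.elim hvX' hvN')
  · -- x ∈ X', u ∈ C'
    have hNsub : ∀ s ∈ N, s ∉ N' → s ∈ X' :=
      fun s hs hsN' => reach_stay (side_X G X') (h1 x s hx hs hxN' hsN') hxX'
    have hNC' : ∀ s ∈ N, s ∉ C' := by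
      intro s hs hsC'
      exact (C_disj G X' s hsC').1 (hNsub s hs (C_disj G X' s hsC').2)
    rcases hdich with hd | hd
    · -- N' ∩ C = ∅
      have hN'C : ∀ s ∈ N', s ∉ C := by
        intro s hs hsC
        exact (C_disj G X s hsC).1 (hd s hs (C_disj G X s hsC).2)
      rcases huv with ⟨huX, hvC⟩ | ⟨hvX, huC⟩
      · -- u ∈ X, v ∈ C: show v ∈ X'
        right
        refine ⟨?_, huC'⟩
        have hvC' : v ∉ C' := fun hvC' =>
          corner hG (side_C G X) (side_C G X') hNC' hN'C hvC hvC' hx hxN'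
            (fun hc => (C_disj G X x hc).2 hx) hX.2.1
        have hvN' : v ∉ N' := fun h => hN'C v h hvC
        by_contra hvX'
        exact hvC' (fun h => h.elim hvX' hvN')
      · -- u ∈ C ∩ C': contradiction
        exact absurd (corner hG (side_C G X) (side_C G X') hNC' hN'C huC huC' hx hxN'
          (fun hc => (C_disj G X x hc).2 hx) hX.2.1) not_false
    · -- N' ∩ X = ∅
      have hN'X : ∀ s ∈ N', s ∉ X := by
        intro s hs hsX
        exact (C_disj G X s (hd s hs (X_nbhd_disj G X s · hsX))).1 hsX
      rcases huv with ⟨huX, hvC⟩ | ⟨hvX, huC⟩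
      · -- u ∈ X ∩ C': contradiction
        exact absurd (corner hG (side_X G X) (side_C G X') hNC' hN'X huX huC' hx hxN'
          (X_nbhd_disj G X x hx) hX.2.1) not_false
      · -- v ∈ X: show v ∈ X'
        right
        refine ⟨?_, huC'⟩
        have hvC' : v ∉ C' := fun hvC' =>
          corner hG (side_X G X) (side_C G X') hNC' hN'X hvX hvC' hx hxN'
            (X_nbhd_disj G X x hx) hX.2.1
        have hvN' : v ∉ N' := fun h => hN'X v h hvX
        by_contra hvX'
        exact hvC' (fun h => h.elim hvX' hvN')
end

section
/- Let G be a d-connected graph and let X be a d-fragment of G such that N_G(X) is a clique in G. Let G′ be the subgraph of G induced by X ∪ N_G(X). Then for all u ∈ X and v ∈ X ∪ N_G(X), the maximum number of internally vertex-disjoint u–v paths in G′ equals that in G. -/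
variable {V : Type*}

lemma adj_mem_union {G : SimpleGraph V} {X : Set V} {a b : V}
    (ha : a ∈ X) (h : G.Adj a b) : b ∈ X ∪ nbhd G X := by
  by_cases hb : b ∈ X
  · exact Or.inl hb
  · exact Or.inr ⟨hb, a, ha, h⟩

/-- From a path starting outside `S := X ∪ N(X)` and ending in `S`, extract a suffix
starting at a vertex of `N(X)`. -/
lemma surgeryB {G : SimpleGraph V} {X : Set V} :
    ∀ {w v : V} (p : G.Walk w v), p.IsPath → w ∉ X ∪ nbhd G X → v ∈ X ∪ nbhd G X →
    ∃ c, ∃ _ : c ∈ nbhd G X, ∃ p' : G.Walk c v,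
      p'.IsPath ∧ p'.support.Sublist p.support := by
  intro w v p
  induction p with
  | nil => intro _ hw hv; exact absurd hv hw
  | @cons w x v h2 p2 ih =>
    intro hp hw hv
    by_cases hx : x ∈ X ∪ nbhd G X
    · have hxn : x ∈ nbhd G X := by
        rcases hx with hx | hx
        · exact absurd (adj_mem_union hx h2.symm) hw
        · exact hx
      refine ⟨x, hxn, p2, hp.of_cons, ?_⟩
      rw [SimpleGraph.Walk.support_cons]
      exact List.sublist_cons_self _ _
    · obtain ⟨c, hc, p', hp', hsub⟩ := ih hp.of_cons hx hv
      refine ⟨c, hc, p', hp', hsub.trans ?_⟩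
      rw [SimpleGraph.Walk.support_cons]
      exact List.sublist_cons_self _ _

lemma surgeryA {G : SimpleGraph V} {X : Set V}
    (hclique : ∀ a ∈ nbhd G X, ∀ b ∈ nbhd G X, a ≠ b → G.Adj a b) :
    ∀ (n : ℕ) {a v : V} (p : G.Walk a v), p.length ≤ n → p.IsPath →
    ∀ (ha : a ∈ X ∪ nbhd G X) (hv : v ∈ X ∪ nbhd G X),
    ∃ q : (G.induce (X ∪ nbhd G X)).Walk ⟨a, ha⟩ ⟨v, hv⟩,
      (q.support.map Subtype.val).Sublist p.support ∧
      (a ∈ X → (q.support.map Subtype.val).take 2 = p.support.take 2) := by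
  intro n
  induction n with
  | zero =>
    intro a v p hl hp ha hv
    cases p with
    | nil => exact ⟨SimpleGraph.Walk.nil, by simp, by simp⟩
    | cons h p' => simp at hl
  | succ n ih =>
    intro a v p hl hp ha hv
    cases p with
    | nil => exact ⟨SimpleGraph.Walk.nil, by simp, by simp⟩
    | @cons _ w _ h p' =>
      by_cases hw : w ∈ X ∪ nbhd G X
      · obtain ⟨q', hsub, _⟩ := ih p' (by simpa using hl) hp.of_cons hw hv
        have hadj : (G.induce (X ∪ nbhd G X)).Adj ⟨a, ha⟩ ⟨w, hw⟩ := h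
        refine ⟨SimpleGraph.Walk.cons hadj q', ?_, ?_⟩
        · rw [SimpleGraph.Walk.support_cons, SimpleGraph.Walk.support_cons, List.map_cons]
          exact hsub.cons₂ _
        · intro _
          rw [SimpleGraph.Walk.support_cons, SimpleGraph.Walk.support_cons, List.map_cons,
            q'.support_eq_cons, p'.support_eq_cons]
          simp [-SimpleGraph.Walk.cons_tail_support]
      · have haX : a ∈ nbhd G X := by
          rcases ha with haX | haX
          · exact absurd (adj_mem_union haX h) hw
          · exact haX
        obtain ⟨c, hc, p'', hp'', hsub''⟩ := surgeryB p' hp.of_cons hw hv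
        have hlen : p''.length ≤ n := by
          have h1 := hsub''.length_le
          rw [SimpleGraph.Walk.length_support, SimpleGraph.Walk.length_support] at h1
          rw [SimpleGraph.Walk.length_cons] at hl
          omega
        obtain ⟨q'', hsub, _⟩ := ih p'' hlen hp'' (Or.inr hc) hv
        have hac : a ≠ c := by
          intro heq
          have : c ∈ p'.support := hsub''.subset p''.start_mem_support
          rw [← heq] at this
          exact ((SimpleGraph.Walk.cons_isPath_iff h p').mp hp).2 this
        have hadj : (G.induce (X ∪ nbhd G X)).Adj ⟨a, ha⟩ ⟨c, Or.inr hc⟩ :=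
          hclique a haX c hc hac
        refine ⟨SimpleGraph.Walk.cons hadj q'', ?_, ?_⟩
        · rw [SimpleGraph.Walk.support_cons, SimpleGraph.Walk.support_cons, List.map_cons]
          exact (hsub.trans hsub'').cons₂ _
        · intro haX'
          exact absurd haX' haX.1

lemma eq_cons_nil_of_take_two {G : SimpleGraph V} {u v : V} (p : G.Walk u v)
    (hp : p.IsPath) (huv : u ≠ v) (h2 : p.support.take 2 = [u, v]) :
    ∃ h : G.Adj u v, p = SimpleGraph.Walk.cons h SimpleGraph.Walk.nil := by
  cases p with
  | nil => simp at h2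
  | @cons _ w _ h p' =>
    have hw : w = v := by
      rw [SimpleGraph.Walk.support_cons, p'.support_eq_cons] at h2
      simpa [-SimpleGraph.Walk.cons_tail_support] using h2
    subst hw
    have : p' = SimpleGraph.Walk.nil := by
      have := SimpleGraph.Path.loop_eq (⟨p', hp.of_cons⟩ : G.Path w w)
      exact congrArg Subtype.val this
    subst this
    exact ⟨h, rfl⟩

lemma loop_iff {W : Type*} (H : SimpleGraph W) (w : W) (k : ℕ) :
    HasIntDisjPaths H w w k ↔ k ≤ 1 := by
  constructor
  · rintro ⟨f, finj, -⟩
    by_contra hk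
    push_neg at hk
    have h01 : (⟨0, by omega⟩ : Fin k) ≠ ⟨1, by omega⟩ := by
      simp [Fin.ext_iff]
    exact h01 (finj (by rw [SimpleGraph.Path.loop_eq (f _), SimpleGraph.Path.loop_eq (f _)]))
  · intro hk
    refine ⟨fun _ => SimpleGraph.Path.nil, ?_, ?_⟩
    · intro i j _
      have : i.val = j.val := by omega
      exact Fin.ext this
    · intro i j hij
      have : i.val = j.val := by omega
      exact absurd (Fin.ext this) hij

lemma transfer_forward {G : SimpleGraph V} {S : Set V} {u v : V}
    (hu : u ∈ S) (hv : v ∈ S) (k : ℕ)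
    (h : HasIntDisjPaths (G.induce S) ⟨u, hu⟩ ⟨v, hv⟩ k) :
    HasIntDisjPaths G u v k := by
  obtain ⟨f, finj, fdisj⟩ := h
  refine ⟨fun i => SimpleGraph.Path.mapEmbedding (SimpleGraph.Embedding.induce S) (f i),
    fun i j hij => finj (SimpleGraph.Path.mapEmbedding_injective _ _ _ hij), ?_⟩
  intro i j hij x hxi hxj
  simp only [SimpleGraph.Path.mapEmbedding, SimpleGraph.Path.map,
    SimpleGraph.Walk.support_map, List.mem_map] at hxi hxj
  replace hxi : x ∈ ((f i).1.map (SimpleGraph.Embedding.induce S).toHom).support := hxi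
  replace hxj : x ∈ ((f j).1.map (SimpleGraph.Embedding.induce S).toHom).support := hxj
  rw [SimpleGraph.Walk.support_map, List.mem_map] at hxi hxj
  obtain ⟨y, hy, hyx⟩ := hxi
  obtain ⟨z, hz, hzx⟩ := hxj
  have hyz : y = z := Subtype.ext (by simp_all)
  subst hyz
  rcases fdisj i j hij y hy hz with h1 | h1 <;> subst h1
  · left; exact hyx.symm
  · right; exact hyx.symm

lemma transfer_backward {G : SimpleGraph V} {X : Set V}
    (hclique : ∀ a ∈ nbhd G X, ∀ b ∈ nbhd G X, a ≠ b → G.Adj a b)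
    {u v : V} (hu : u ∈ X) (hv : v ∈ X ∪ nbhd G X) (huv : u ≠ v) (k : ℕ)
    (h : HasIntDisjPaths G u v k) :
    HasIntDisjPaths (G.induce (X ∪ nbhd G X)) ⟨u, Or.inl hu⟩ ⟨v, hv⟩ k := by
  classical
  obtain ⟨f, finj, fdisj⟩ := h
  have key := fun i : Fin k =>
    surgeryA hclique (f i).1.length (f i).1 le_rfl (f i).2 (Or.inl hu) hv
  choose q hsub htake using key
  have hqpath : ∀ i, (q i).IsPath := by
    intro i
    rw [SimpleGraph.Walk.isPath_def]
    exact List.Nodup.of_map _ ((hsub i).nodup (f i).2.support_nodup)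
  refine ⟨fun i => ⟨q i, hqpath i⟩, ?_, ?_⟩
  · intro i j hgij
    by_contra hij
    have hq : q i = q j := congrArg Subtype.val hgij
    set L : List V := (q i).support.map Subtype.val with hLdef
    have hall : ∀ x ∈ L, x = u ∨ x = v := by
      intro x hx
      refine fdisj i j hij x ((hsub i).subset hx) ((hsub j).subset ?_)
      rw [← hq]
      exact hx
    have hnodup : L.Nodup := (hsub i).nodup (f i).2.support_nodup
    have huL : u ∈ L := List.mem_map_of_mem (q i).start_mem_support
    have hvL : v ∈ L := List.mem_map_of_mem (q i).end_mem_support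
    have hfin : L.toFinset = {u, v} := by
      apply Finset.Subset.antisymm
      · intro x hx
        rcases hall x (List.mem_toFinset.mp hx) with h1 | h1 <;> simp [h1]
      · intro x hx
        rcases Finset.mem_insert.mp hx with h1 | h1
        · subst h1; exact List.mem_toFinset.mpr huL
        · rw [Finset.mem_singleton] at h1; subst h1; exact List.mem_toFinset.mpr hvL
    have hlen2 : L.length = 2 := by
      rw [← List.toFinset_card_of_nodup hnodup, hfin]
      rw [Finset.card_insert_of_notMem (by simpa using huv), Finset.card_singleton]
    obtain ⟨x, y, hxy⟩ := List.length_eq_two.mp hlen2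
    have hLhead : L = u :: ((q i).support.tail.map Subtype.val) := by
      rw [hLdef, (q i).support_eq_cons, List.map_cons]
      simp
    have hxu : x = u := by rw [hxy] at hLhead; exact (List.cons.injEq _ _ _ _ ▸ hLhead).1
    have hyv : y = v := by
      rcases hall y (by rw [hxy]; simp) with h1 | h1
      · exfalso
        rw [hxy, hxu, h1] at hnodup
        simp [huv] at hnodup
      · exact h1
    rw [hxu, hyv] at hxy
    have htk : L.take 2 = [u, v] := by rw [hxy]; rfl
    have hti : (f i).1.support.take 2 = [u, v] := by rw [← htake i hu]; exact htk
    have htj : (f j).1.support.take 2 = [u, v] := by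
      rw [← htake j hu, ← hq]; exact htk
    obtain ⟨hi_adj, hi⟩ := eq_cons_nil_of_take_two (f i).1 (f i).2 huv hti
    obtain ⟨hj_adj, hj⟩ := eq_cons_nil_of_take_two (f j).1 (f j).2 huv htj
    exact hij (finj (Subtype.ext (hi.trans hj.symm)))
  · intro i j hij x hxi hxj
    have h1 : (x : V) ∈ (f i).1.support := (hsub i).subset (List.mem_map_of_mem hxi)
    have h2 : (x : V) ∈ (f j).1.support := (hsub j).subset (List.mem_map_of_mem hxj)
    rcases fdisj i j hij x h1 h2 with h3 | h3
    · left; exact Subtype.ext h3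
    · right; exact Subtype.ext h3

theorem stmt4 [Fintype V] (G : SimpleGraph V) (d : ℕ) (hG : dConnected G d)
    (X : Set V) (hX : IsFragment G d X)
    (hclique : ∀ a ∈ nbhd G X, ∀ b ∈ nbhd G X, a ≠ b → G.Adj a b)
    (u v : V) (hu : u ∈ X) (hv : v ∈ X ∪ nbhd G X) :
    localConn (G.induce (X ∪ nbhd G X)) ⟨u, Set.mem_union_left _ hu⟩ ⟨v, hv⟩ =
      localConn G u v := by
  have hset : {k | HasIntDisjPaths (G.induce (X ∪ nbhd G X))
      ⟨u, Set.mem_union_left _ hu⟩ ⟨v, hv⟩ k} = {k | HasIntDisjPaths G u v k} := by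
    ext k
    simp only [Set.mem_setOf_eq]
    by_cases huv : u = v
    · subst huv
      rw [loop_iff, loop_iff]
    · constructor
      · exact transfer_forward _ hv k
      · exact transfer_backward hclique hu hv huv k
  unfold localConn
  rw [hset]
end

section
/- Let G be a d-connected graph with no crossing d-separators, and let X be an inclusion-wise minimal d-fragment of G. Then X ∪ N_G(X) is a (d+1)-block of G, i.e., a maximal vertex set in which every two vertices are either adjacent or joined by at least d+1 internally vertex-disjoint paths in G. -/
variable {V : Type*}

/-- `W` is a `k`-block of `G`: a maximal vertex set in which any two distinct vertices are
adjacent or joined by at least `k` internally disjoint paths. -/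
def IsBlock (G : SimpleGraph V) (k : ℕ) (W : Set V) : Prop :=
  (∀ a ∈ W, ∀ b ∈ W, a ≠ b → G.Adj a b ∨ HasIntDisjPaths G a b k) ∧
  (∀ W' : Set V, W ⊆ W' →
    (∀ a ∈ W', ∀ b ∈ W', a ≠ b → G.Adj a b ∨ HasIntDisjPaths G a b k) → W' = W)

section Infra

variable {G : SimpleGraph V} {S A B : Set V} {u v : V}

/-- every `A`–`B` walk meets `S`. -/
def Cut (G : SimpleGraph V) (A B S : Set V) : Prop :=
  ∀ ⦃u v : V⦄ (w : G.Walk u v), u ∈ A → v ∈ B → ∃ x ∈ w.support, x ∈ S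

lemma reachOutside_of_walk : ∀ {p q : V} (w : G.Walk p q), (∀ x ∈ w.support, x ∉ S) →
    ReachOutside G S p q := by
  intro p q w
  induction w with
  | nil =>
    intro h
    rename_i z
    have hu : z ∈ Sᶜ := h z (by simp)
    exact ⟨hu, hu, by rfl⟩
  | @cons a b c hadj p ih =>
    intro h
    have ha : a ∈ Sᶜ := h a (by simp)
    have hb : b ∈ Sᶜ := h b (by simp)
    obtain ⟨hb', hc', hr⟩ := ih (fun x hx => h x (by simp [hx]))
    refine ⟨ha, hc', SimpleGraph.Reachable.trans ?_ hr⟩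
    exact SimpleGraph.Adj.reachable (by simpa using hadj)

lemma walk_of_reachOutside (h : ReachOutside G S u v) :
    ∃ w : G.Walk u v, ∀ x ∈ w.support, x ∉ S := by
  obtain ⟨hu, hv, hr⟩ := h
  obtain ⟨p⟩ := hr
  refine ⟨p.map (SimpleGraph.Embedding.induce Sᶜ).toHom, ?_⟩
  intro x hx
  replace hx : x ∈ (p.map (SimpleGraph.Embedding.induce Sᶜ).toHom).support := hx
  rw [SimpleGraph.Walk.support_map, List.mem_map] at hx
  obtain ⟨⟨y, hy⟩, _, rfl⟩ := hx
  exact hy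

lemma reachOutside_iff : ReachOutside G S u v ↔ ∃ w : G.Walk u v, ∀ x ∈ w.support, x ∉ S :=
  ⟨walk_of_reachOutside, fun ⟨w, h⟩ => reachOutside_of_walk w h⟩

lemma not_reachOutside_iff : ¬ ReachOutside G S u v ↔ ∀ w : G.Walk u v, ∃ x ∈ w.support, x ∈ S := by
  rw [reachOutside_iff]
  push_neg
  simp



lemma reachOutside_symm (h : ReachOutside G S u v) : ReachOutside G S v u := by
  obtain ⟨w, hw⟩ := walk_of_reachOutside h
  exact reachOutside_of_walk w.reverse (by simpa using hw)

lemma reachOutside_trans {t : V} (h1 : ReachOutside G S u v) (h2 : ReachOutside G S v t) :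
    ReachOutside G S u t := by
  obtain ⟨w1, hw1⟩ := walk_of_reachOutside h1
  obtain ⟨w2, hw2⟩ := walk_of_reachOutside h2
  refine reachOutside_of_walk (w1.append w2) ?_
  intro x hx
  rcases (SimpleGraph.Walk.mem_support_append_iff _ _).1 hx with h | h
  · exact hw1 x h
  · exact hw2 x h

lemma reachOutside_refl (h : u ∉ S) : ReachOutside G S u u :=
  reachOutside_of_walk SimpleGraph.Walk.nil (by simpa using h)

/-- every vertex on a walk avoiding `S` is reachable outside `S` from the start. -/
lemma reachOutside_mem_support : ∀ {p q : V} (w : G.Walk p q), (∀ x ∈ w.support, x ∉ S) →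
    ∀ t ∈ w.support, ReachOutside G S p t := by
  intro p q w
  induction w with
  | nil =>
    intro h t ht
    rename_i z
    simp only [SimpleGraph.Walk.support_nil, List.mem_singleton] at ht
    subst ht
    exact reachOutside_refl (h t (by simp))
  | @cons a b c hadj p ih =>
    intro h t ht
    rcases (by simpa using ht : t = a ∨ t ∈ p.support) with rfl | ht'
    · exact reachOutside_refl (h t (by simp))
    · refine reachOutside_trans ?_ (ih (fun x hx => h x (by simp [hx])) t ht')
      exact reachOutside_of_walk (SimpleGraph.Walk.cons hadj .nil)
        (by intro x hx; simp at hx; rcases hx with rfl | rfl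
            · exact h x (by simp)
            · exact h x (by simp))

/-- prefix of a walk up to the first vertex belonging to `X`. -/
lemma exists_prefix_firstHit {X : Set V} : ∀ {p q : V} (w : G.Walk p q),
    (∃ x ∈ w.support, x ∈ X) →
    ∃ (z : V) (_ : z ∈ X) (w₁ : G.Walk p z), w₁.support.Sublist w.support ∧
      (∀ e ∈ w₁.edges, e ∈ w.edges) ∧ ∀ t ∈ w₁.support, t ∈ X → t = z := by
  intro p q w
  induction w with
  | nil =>
    intro h
    rename_i z
    refine ⟨z, by simpa using h, .nil, by simp, by simp, by simp⟩
  | @cons a b c hadj p ih =>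
    intro h
    by_cases ha : a ∈ X
    · refine ⟨a, ha, .nil, ?_, by simp, by simp⟩
      simpa using List.cons_sublist_cons.mpr (List.nil_sublist _)
    · have hex : ∃ x ∈ p.support, x ∈ X := by
        obtain ⟨x, hx, hxX⟩ := h
        rcases (by simpa using hx : x = a ∨ x ∈ p.support) with rfl | hx'
        · exact absurd hxX ha
        · exact ⟨x, hx', hxX⟩
      obtain ⟨z, hz, w₁, hs, he, hmeet⟩ := ih hex
      refine ⟨z, hz, .cons hadj w₁, ?_, ?_, ?_⟩
      · simpa using List.Sublist.cons₂ a hs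
      · intro e he'
        simp only [SimpleGraph.Walk.edges_cons, List.mem_cons] at he' ⊢
        rcases he' with rfl | he'
        · exact .inl rfl
        · exact .inr (he e he')
      · intro t ht htX
        rcases (by simpa using ht : t = a ∨ t ∈ w₁.support) with rfl | ht'
        · exact absurd htX ha
        · exact hmeet t ht' htX


section Contract

variable [DecidableEq V] {x y : V}

/-- the contraction of the edge `xy`, realized on the same vertex set with `y` isolated. -/
@[reducible] def contractG (G : SimpleGraph V) (x y : V) : SimpleGraph V where
  Adj u v := u ≠ v ∧ u ≠ y ∧ v ≠ y ∧
    (G.Adj u v ∨ (G.Adj u y ∧ v = x) ∨ (G.Adj v y ∧ u = x))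
  symm := by
    constructor
    intro u v ⟨h1, h2, h3, h4⟩
    refine ⟨h1.symm, h3, h2, ?_⟩
    rcases h4 with h | h | h
    · exact .inl h.symm
    · exact .inr (.inr h)
    · exact .inr (.inl h)
  loopless := ⟨fun u h => h.1 rfl⟩

/-- projection of a walk of `G` to the contraction. -/
lemma exists_proj_walk (hxy : G.Adj x y) : ∀ {p q : V} (w : G.Walk p q),
    ∃ w' : (contractG G x y).Walk (if p = y then x else p) (if q = y then x else q),
      ∀ t ∈ w'.support, ∃ t₀ ∈ w.support, t = (if t₀ = y then x else t₀) := by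
  intro p q w
  induction w with
  | nil =>
    rename_i z
    exact ⟨.nil, by intro t ht; exact ⟨z, by simp, by simpa using ht⟩⟩
  | @cons a b c hadj p ih =>
    obtain ⟨W, hW⟩ := ih
    by_cases hab : (if a = y then x else a) = (if b = y then x else b)
    · refine ⟨W.copy hab.symm rfl, ?_⟩
      intro t ht
      rw [SimpleGraph.Walk.support_copy] at ht
      obtain ⟨t₀, ht₀, rfl⟩ := hW t ht
      exact ⟨t₀, by simp [ht₀], rfl⟩
    · have hxny : x ≠ y := hxy.ne
      have hadj' : (contractG G x y).Adj (if a = y then x else a) (if b = y then x else b) := by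
        by_cases ha : a = y <;> by_cases hb : b = y
        · exact absurd (ha.trans hb.symm) hadj.ne
        · simp only [ha, hb, if_true, if_false, if_pos rfl, if_neg hb] at hab ⊢
          refine ⟨hab, hxny, hb, .inr (.inr ⟨?_, trivial⟩)⟩
          have : G.Adj y b := ha ▸ hadj
          exact this.symm
        · simp only [ha, hb, if_true, if_false, if_pos rfl, if_neg ha] at hab ⊢
          refine ⟨hab, ha, hxny, .inr (.inl ⟨?_, trivial⟩)⟩
          exact hb ▸ hadj
        · simp only [if_neg ha, if_neg hb] at hab ⊢
          exact ⟨hab, ha, hb, .inl hadj⟩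
      refine ⟨.cons hadj' W, ?_⟩
      intro t ht
      rcases (by simpa using ht : t = (if a = y then x else a) ∨ t ∈ W.support) with rfl | ht'
      · exact ⟨a, by simp, rfl⟩
      · obtain ⟨t₀, ht₀, rfl⟩ := hW t ht'
        exact ⟨t₀, by simp [ht₀], rfl⟩

/-- lifting a walk of the contraction back to `G`. -/
lemma exists_lift_walk (hxy : G.Adj x y) : ∀ {p q : V} (w : (contractG G x y).Walk p q),
    p ≠ y → ∃ w' : G.Walk p q, (∀ t ∈ w'.support, t ∈ w.support ∨ t = y) ∧
      (y ∈ w'.support → x ∈ w.support) := by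
  intro p q w
  induction w with
  | nil =>
    intro hp
    refine ⟨.nil, by simp, ?_⟩
    intro hy
    rename_i z
    have hz : y = z := by simpa using hy
    exact absurd hz.symm hp
  | @cons a b c hadj p ih =>
    intro _
    obtain ⟨W, hW1, hW2⟩ := ih hadj.2.2.1
    rcases hadj.2.2.2 with h | ⟨h1, h2⟩ | ⟨h1, h2⟩
    · refine ⟨.cons h W, ?_, ?_⟩
      · intro t ht
        rcases (by simpa using ht : t = a ∨ t ∈ W.support) with rfl | ht'
        · exact .inl (by simp)
        · rcases hW1 t ht' with h' | h'
          · exact .inl (by simp [h'])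
          · exact .inr h'
      · intro hy
        rcases (by simpa using hy : y = a ∨ y ∈ W.support) with rfl | hy'
        · exact absurd rfl hadj.2.1
        · simp [hW2 hy']
    · -- G.Adj a y and b = x
      subst h2
      refine ⟨.cons h1 (.cons hxy.symm W), ?_, ?_⟩
      · intro t ht
        rcases (by simpa using ht : t = a ∨ t = y ∨ t ∈ W.support) with rfl | rfl | ht'
        · exact .inl (by simp)
        · exact .inr rfl
        · rcases hW1 t ht' with h' | h'
          · exact .inl (by simp [h'])
          · exact .inr h'
      · intro _
        simp
    · -- G.Adj b y and a = x
      subst h2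
      refine ⟨.cons hxy (.cons h1.symm W), ?_, ?_⟩
      · intro t ht
        rcases (by simpa using ht : t = a ∨ t = y ∨ t ∈ W.support) with rfl | rfl | ht'
        · exact .inl (by simp)
        · exact .inr rfl
        · rcases hW1 t ht' with h' | h'
          · exact .inl (by simp [h'])
          · exact .inr h'
      · intro _
        simp

/-- a walk of `G` avoiding `y` is a walk of the contraction. -/
lemma exists_embed_walk : ∀ {p q : V} (w : G.Walk p q), (∀ t ∈ w.support, t ≠ y) →
    ∃ w' : (contractG G x y).Walk p q, w'.support = w.support := by
  intro p q w
  induction w with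
  | nil => exact fun _ => ⟨.nil, by simp⟩
  | @cons a b c hadj p ih =>
    intro h
    obtain ⟨W, hW⟩ := ih (fun t ht => h t (by simp [ht]))
    have hadj' : (contractG G x y).Adj a b :=
      ⟨hadj.ne, h a (by simp), h b (by simp), .inl hadj⟩
    exact ⟨.cons hadj' W, by simp [hW]⟩

end Contract

section Measure

variable {x y : V}

def AdjPairs (G : SimpleGraph V) : Set (V × V) := {p | G.Adj p.1 p.2}

lemma ncard_adjPairs_delete_lt [Finite V] {G : SimpleGraph V} (hxy : G.Adj x y) :
    (AdjPairs (G.deleteEdges {s(x, y)})).ncard < (AdjPairs G).ncard := by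
  refine Set.ncard_lt_ncard ?_ (Set.toFinite _)
  constructor
  · rintro ⟨u, v⟩ h
    exact h.1
  · intro hsub
    have : ((x, y) : V × V) ∈ AdjPairs (G.deleteEdges {s(x, y)}) := hsub hxy
    exact this.2 (by simp [hxy.ne])

lemma ncard_adjPairs_contract_lt [Finite V] [DecidableEq V] {G : SimpleGraph V}
    [DecidableRel G.Adj] (hxy : G.Adj x y) :
    (AdjPairs (contractG G x y)).ncard < (AdjPairs G).ncard := by
  set f : V × V → V × V :=
    fun p => if G.Adj p.1 p.2 then p else if p.2 = x then (p.1, y) else (y, p.2) with hf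
  have hmaps : ∀ p ∈ AdjPairs (contractG G x y), f p ∈ AdjPairs G \ {((x, y) : V × V)} := by
    rintro ⟨u, v⟩ ⟨hne, hu, hv, hd⟩
    by_cases hA : G.Adj u v
    · refine ⟨by simp only [hf, if_pos hA]; exact hA, ?_⟩
      simp only [hf, if_pos hA, Set.mem_singleton_iff, Prod.mk.injEq]
      rintro ⟨rfl, rfl⟩
      exact hv rfl
    · rcases hd with h | ⟨h1, h2⟩ | ⟨h1, h2⟩
      · exact absurd h hA
      · have huv : u ≠ x := fun h => hne (h.trans h2.symm)
        refine ⟨by simp only [hf, if_neg hA, if_pos h2]; exact h1, ?_⟩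
        simp only [hf, if_neg hA, if_pos h2, Set.mem_singleton_iff, Prod.mk.injEq]
        rintro ⟨rfl, -⟩
        exact huv rfl
      · have hvx : v ≠ x := fun h => hne (h2.trans h.symm)
        refine ⟨by simp only [hf, if_neg hA, if_neg hvx]; exact h1.symm, ?_⟩
        simp only [hf, if_neg hA, if_neg hvx, Set.mem_singleton_iff, Prod.mk.injEq]
        rintro ⟨h', -⟩
        exact hxy.ne h'.symm
  have hinj : Set.InjOn f (AdjPairs (contractG G x y)) := by
    rintro ⟨u, v⟩ ⟨hne, hu, hv, hd⟩ ⟨u', v'⟩ ⟨hne', hu', hv', hd'⟩ heq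
    have fst3 : ∀ a b : V, ¬ G.Adj a b → a ≠ y → b ≠ y → a ≠ b →
        (G.Adj a b ∨ (G.Adj a y ∧ b = x) ∨ (G.Adj b y ∧ a = x)) → b ≠ x → a = x := by
      rintro a b hAB _ _ hab (h | ⟨h1, h2⟩ | ⟨h1, h2⟩) hbx
      · exact absurd h hAB
      · exact absurd h2 hbx
      · exact h2
    by_cases hA : G.Adj u v <;> by_cases hB : G.Adj u' v' <;>
      simp only [hf, hA, hB, ite_true, ite_false, if_pos, if_neg, not_false_iff] at heq
    · exact heq
    · split_ifs at heq with h
      · exact absurd (congrArg Prod.snd heq) hv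
      · exact absurd (congrArg Prod.fst heq) hu
    · split_ifs at heq with h
      · exact absurd (congrArg Prod.snd heq).symm hv'
      · exact absurd (congrArg Prod.fst heq).symm hu'
    · split_ifs at heq with h ha hb
      · have h1 := congrArg Prod.fst heq
        simp only at h1
        simp [Prod.mk.injEq, h1, h.trans ha.symm]
      · exact absurd (congrArg Prod.fst heq) hu
      · exact absurd (congrArg Prod.fst heq).symm hu'
      · have h2 := congrArg Prod.snd heq
        simp only at h2
        have e1 : u = x := fst3 u v hA hu hv hne hd h
        have e2 : u' = x := fst3 u' v' hB hu' hv' hne' hd' hb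
        simp [Prod.mk.injEq, h2, e1.trans e2.symm]
  have h1 : (AdjPairs (contractG G x y)).ncard ≤ (AdjPairs G \ {((x, y) : V × V)}).ncard :=
    Set.ncard_le_ncard_of_injOn f hmaps hinj (Set.toFinite _)
  exact h1.trans_lt (Set.ncard_diff_singleton_lt_of_mem hxy (Set.toFinite _))

end Measure

section Menger

variable {G : SimpleGraph V} {A B S X : Set V} {k : ℕ}

/-- `k` fully disjoint `A`–`B` paths. -/
def SetPaths (G : SimpleGraph V) (A B : Set V) (k : ℕ) : Prop :=
  ∃ (a b : Fin k → V) (p : ∀ i : Fin k, G.Walk (a i) (b i)),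
    (∀ i, (p i).IsPath) ∧ (∀ i, a i ∈ A) ∧ (∀ i, b i ∈ B) ∧
    ∀ i j, i ≠ j → ∀ t, t ∈ (p i).support → t ∉ (p j).support

lemma exists_inj_fun {α : Type*} {A : Set α} (h : k ≤ A.ncard) (hfin : A.Finite) :
    ∃ f : Fin k → α, Function.Injective f ∧ ∀ i, f i ∈ A := by
  obtain ⟨t, hts, htc⟩ := Set.exists_subset_card_eq h
  have htf : t.Finite := hfin.subset hts
  have hcard : htf.toFinset.card = k := by
    rw [← htc, Set.ncard_eq_toFinset_card _ htf]
  let e := Finset.equivFinOfCardEq hcard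
  refine ⟨fun i => (e.symm i : α), ?_, ?_⟩
  · intro i j hij
    have := Subtype.ext hij
    simpa using e.symm.injective this
  · intro i
    exact hts (htf.mem_toFinset.1 (e.symm i).2)

lemma surj_of_inj_ncard {f : Fin k → V} (hX : X.ncard = k) (hfin : X.Finite)
    (hinj : Function.Injective f) (hsub : ∀ i, f i ∈ X) : ∀ z ∈ X, ∃ i, f i = z := by
  have h1 : Set.range f ⊆ X := by rintro _ ⟨i, rfl⟩; exact hsub i
  have h2 : (Set.range f).ncard = k := by
    rw [← Set.image_univ, Set.ncard_image_of_injective _ hinj, Set.ncard_univ,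
      Nat.card_eq_fintype_card, Fintype.card_fin]
  have := Set.eq_of_subset_of_ncard_le h1 (by rw [hX, h2]) hfin
  intro z hz
  rw [← this] at hz
  exact hz

lemma end_not_mem_takeUntil [DecidableEq V] {u v t : V} (p : G.Walk u v) (hp : p.IsPath)
    (ht : t ∈ p.support) (hne : t ≠ v) : v ∉ (p.takeUntil t ht).support := by
  intro hv
  have hspec := p.take_spec ht
  have hnd : p.support.Nodup := hp.support_nodup
  have hsupp := SimpleGraph.Walk.support_append (p.takeUntil t ht) (p.dropUntil t ht)
  rw [hspec] at hsupp
  rw [hsupp] at hnd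
  have hvd : v ∈ (p.dropUntil t ht).support.tail := by
    have hve : v ∈ (p.dropUntil t ht).support := SimpleGraph.Walk.end_mem_support _
    have hcons : (p.dropUntil t ht).support = t :: (p.dropUntil t ht).support.tail :=
      SimpleGraph.Walk.support_eq_cons _
    rw [hcons] at hve
    rcases List.mem_cons.1 hve with rfl | h
    · exact absurd rfl hne
    · exact h
  exact (List.disjoint_of_nodup_append hnd) hv hvd

lemma start_not_mem_dropUntil [DecidableEq V] {u v t : V} (p : G.Walk u v) (hp : p.IsPath)
    (ht : t ∈ p.support) (hne : t ≠ u) : u ∉ (p.dropUntil t ht).support.tail := by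
  intro hu
  have hspec := p.take_spec ht
  have hnd : p.support.Nodup := hp.support_nodup
  have hsupp := SimpleGraph.Walk.support_append (p.takeUntil t ht) (p.dropUntil t ht)
  rw [hspec] at hsupp
  rw [hsupp] at hnd
  exact (List.disjoint_of_nodup_append hnd) (SimpleGraph.Walk.start_mem_support _) hu

theorem mengerSet [Finite V] :
    ∀ (G : SimpleGraph V) (A B : Set V), (∀ S : Set V, Cut G A B S → k ≤ S.ncard) →
      SetPaths G A B k := by
  classical
  suffices H : ∀ (n : ℕ) (G : SimpleGraph V) (A B : Set V), (AdjPairs G).ncard = n →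
      (∀ S : Set V, Cut G A B S → k ≤ S.ncard) → SetPaths G A B k by
    exact fun G A B h => H _ G A B rfl h
  intro n
  induction n using Nat.strong_induction_on with
  | _ n IH =>
  intro G A B hn hcuts
  by_cases hE : ∀ u v : V, ¬ G.Adj u v
  · -- base case : no edges
    have hcutAB : Cut G A B (A ∩ B) := by
      intro u v w hu hv
      cases w with
      | nil => exact ⟨u, by simp, hu, hv⟩
      | cons h p => exact absurd h (hE _ _)
    obtain ⟨f, hfinj, hfmem⟩ := exists_inj_fun (hcuts _ hcutAB) (Set.toFinite _)
    refine ⟨f, f, fun i => .nil, fun i => by simp [SimpleGraph.Walk.isPath_def],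
      fun i => (hfmem i).1, fun i => (hfmem i).2, ?_⟩
    intro i j hij t ht ht'
    have h1 : t = f i := by simpa using ht
    have h2 : t = f j := by simpa using ht'
    exact hij (hfinj (h1.symm.trans h2))
  · push_neg at hE
    obtain ⟨x, y, hxy⟩ := hE
    set G' := contractG G x y with hG'
    set A' : Set V := {v | v ≠ y ∧ (v ∈ A ∨ (v = x ∧ y ∈ A))} with hA'
    set B' : Set V := {v | v ≠ y ∧ (v ∈ B ∨ (v = x ∧ y ∈ B))} with hB'
    by_cases hcut' : ∀ S : Set V, Cut G' A' B' S → k ≤ S.ncard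
    · -- contraction branch
      have hlt : (AdjPairs G').ncard < n := hn ▸ ncard_adjPairs_contract_lt hxy
      obtain ⟨a, b, p, hpath, ha, hb, hdisj⟩ := IH _ hlt G' A' B' rfl hcut'
      have hfix : ∀ i : Fin k, ∃ (s t : V) (w : G.Walk s t), s ∈ A ∧ t ∈ B ∧
          (∀ z ∈ w.support, z ∈ (p i).support ∨ z = y) ∧
          (y ∈ w.support → x ∈ (p i).support) := by
        intro i
        obtain ⟨w, hw1, hw2⟩ := exists_lift_walk hxy (p i) (ha i).1
        have hBfix : ∃ (t : V) (w1 : G.Walk (a i) t), t ∈ B ∧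
            (∀ z ∈ w1.support, z ∈ (p i).support ∨ z = y) ∧
            (y ∈ w1.support → x ∈ (p i).support) := by
          rcases (hb i).2 with hB | ⟨hbx, hyB⟩
          · exact ⟨_, w, hB, hw1, hw2⟩
          · have hadjb : G.Adj (b i) y := by rw [hbx]; exact hxy
            refine ⟨y, w.append (.cons hadjb .nil), hyB, ?_, ?_⟩
            · intro z hz
              rcases (SimpleGraph.Walk.mem_support_append_iff _ _).1 hz with h | h
              · exact hw1 z h
              · rcases (by simpa using h : z = b i ∨ z = y) with rfl | rfl
                · exact .inl (SimpleGraph.Walk.end_mem_support _)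
                · exact .inr rfl
            · intro _
              rw [← hbx]
              exact SimpleGraph.Walk.end_mem_support _
        obtain ⟨t, w1, htB, hw11, hw12⟩ := hBfix
        rcases (ha i).2 with hA | ⟨hax, hyA⟩
        · exact ⟨_, _, w1, hA, htB, hw11, hw12⟩
        · have hadja : G.Adj y (a i) := by rw [hax]; exact hxy.symm
          refine ⟨y, t, .cons hadja w1, hyA, htB, ?_, ?_⟩
          · intro z hz
            rcases (by simpa using hz : z = y ∨ z ∈ w1.support) with rfl | h
            · exact .inr rfl
            · exact hw11 z h
          · intro _
            rw [← hax]
            exact SimpleGraph.Walk.start_mem_support _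
      choose s t w hsA htB hsub hy using hfix
      refine ⟨s, t, fun i => (w i).bypass, fun i => SimpleGraph.Walk.bypass_isPath _,
        hsA, htB, ?_⟩
      intro i j hij z hz hz'
      have hz1 := hsub i z (SimpleGraph.Walk.support_bypass_subset _ hz)
      have hz2 := hsub j z (SimpleGraph.Walk.support_bypass_subset _ hz')
      by_cases hzy : z = y
      · subst hzy
        have hxi := hy i (SimpleGraph.Walk.support_bypass_subset _ hz)
        have hxj := hy j (SimpleGraph.Walk.support_bypass_subset _ hz')
        exact hdisj i j hij x hxi hxj
      · rcases hz1 with h1 | h1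
        swap
        · exact hzy h1
        rcases hz2 with h2 | h2
        swap
        · exact hzy h2
        exact hdisj i j hij z h1 h2
    · -- separator branch
      push_neg at hcut'
      obtain ⟨S, hS, hScard⟩ := hcut'
      have hxS : x ∈ S := by
        by_contra hxS
        refine absurd (hcuts S ?_) (not_le.2 hScard)
        intro u v wk hu hv
        obtain ⟨w', hw'⟩ := exists_proj_walk hxy wk
        have hu' : (if u = y then x else u) ∈ A' := by
          split_ifs with h
          · exact ⟨hxy.ne, .inr ⟨rfl, h ▸ hu⟩⟩
          · exact ⟨h, .inl hu⟩
        have hv' : (if v = y then x else v) ∈ B' := by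
          split_ifs with h
          · exact ⟨hxy.ne, .inr ⟨rfl, h ▸ hv⟩⟩
          · exact ⟨h, .inl hv⟩
        obtain ⟨z, hz, hzS⟩ := hS w' hu' hv'
        obtain ⟨t₀, ht₀, rfl⟩ := hw' z hz
        split_ifs at hzS with h
        · exact absurd hzS hxS
        · exact ⟨t₀, ht₀, hzS⟩
      set Xs : Set V := insert y S with hXs
      have hXcut : Cut G A B Xs := by
        intro u v wk hu hv
        by_contra hno
        push_neg at hno
        obtain ⟨w', hw'⟩ := exists_embed_walk (x := x) wk
          (fun z hz h => (hno z hz) (h ▸ Set.mem_insert y S))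
        have hu' : u ∈ A' :=
          ⟨fun h => (hno u wk.start_mem_support) (h ▸ Set.mem_insert y S), .inl hu⟩
        have hv' : v ∈ B' :=
          ⟨fun h => (hno v wk.end_mem_support) (h ▸ Set.mem_insert y S), .inl hv⟩
        obtain ⟨z, hz, hzS⟩ := hS w' hu' hv'
        rw [hw'] at hz
        exact (hno z hz) (Set.mem_insert_of_mem _ hzS)
      have hXk : Xs.ncard = k := by
        have h1 : Xs.ncard ≤ S.ncard + 1 := Set.ncard_insert_le _ _
        have h2 : k ≤ Xs.ncard := hcuts _ hXcut
        omega
      have hxX : x ∈ Xs := Set.mem_insert_of_mem _ hxS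
      have hyX : y ∈ Xs := Set.mem_insert _ _
      set Gd := G.deleteEdges {s(x, y)} with hGd
      have hdlt : (AdjPairs Gd).ncard < n := hn ▸ ncard_adjPairs_delete_lt hxy
      have htransf : ∀ {u v : V} (wk : Gd.Walk u v), ∃ w' : G.Walk u v,
          w'.support = wk.support := by
        intro u v wk
        refine ⟨wk.transfer G ?_, SimpleGraph.Walk.support_transfer _ _⟩
        intro e he
        have h0 := wk.edges_subset_edgeSet he
        rw [hGd, SimpleGraph.edgeSet_deleteEdges] at h0
        exact h0.1
      have hkey1 : ∀ T : Set V, Cut Gd A Xs T → k ≤ T.ncard := by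
        intro T hT
        refine hcuts T ?_
        intro u v wk hu hv
        obtain ⟨z, hzX, w₁, hsubl, _, hfirst⟩ := exists_prefix_firstHit wk (hXcut wk hu hv)
        have hnoe : ∀ e ∈ w₁.edges, e ∈ Gd.edgeSet := by
          intro e he
          rw [hGd, SimpleGraph.edgeSet_deleteEdges]
          refine ⟨w₁.edges_subset_edgeSet he, ?_⟩
          intro hexy
          rw [Set.mem_singleton_iff] at hexy
          subst hexy
          have hxw : x ∈ w₁.support := w₁.fst_mem_support_of_mem_edges he
          have hyw : y ∈ w₁.support := w₁.snd_mem_support_of_mem_edges he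
          exact hxy.ne ((hfirst x hxw hxX).trans (hfirst y hyw hyX).symm)
        obtain ⟨z', hz', hz'T⟩ := hT (w₁.transfer Gd hnoe) hu hzX
        rw [SimpleGraph.Walk.support_transfer] at hz'
        exact ⟨z', hsubl.mem hz', hz'T⟩
      have hkey2 : ∀ T : Set V, Cut Gd Xs B T → k ≤ T.ncard := by
        intro T hT
        refine hcuts T ?_
        intro u v wk hu hv
        have hrev : ∃ z ∈ wk.reverse.support, z ∈ Xs := by
          obtain ⟨z, hz, hzX⟩ := hXcut wk hu hv
          exact ⟨z, by simpa using hz, hzX⟩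
        obtain ⟨z, hzX, w₁, hsubl, _, hfirst⟩ := exists_prefix_firstHit wk.reverse hrev
        have hnoe : ∀ e ∈ w₁.reverse.edges, e ∈ Gd.edgeSet := by
          intro e he
          rw [SimpleGraph.Walk.edges_reverse, List.mem_reverse] at he
          rw [hGd, SimpleGraph.edgeSet_deleteEdges]
          refine ⟨w₁.edges_subset_edgeSet he, ?_⟩
          intro hexy
          rw [Set.mem_singleton_iff] at hexy
          subst hexy
          have hxw : x ∈ w₁.support := w₁.fst_mem_support_of_mem_edges he
          have hyw : y ∈ w₁.support := w₁.snd_mem_support_of_mem_edges he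
          exact hxy.ne ((hfirst x hxw hxX).trans (hfirst y hyw hyX).symm)
        obtain ⟨z', hz', hz'T⟩ := hT (w₁.reverse.transfer Gd hnoe) hzX hv
        rw [SimpleGraph.Walk.support_transfer, SimpleGraph.Walk.support_reverse,
          List.mem_reverse] at hz'
        have : z' ∈ wk.reverse.support := hsubl.mem hz'
        rw [SimpleGraph.Walk.support_reverse, List.mem_reverse] at this
        exact ⟨z', this, hz'T⟩
      obtain ⟨a, f, p, hp, haA, hfX, hdisj1⟩ := IH _ hdlt Gd A Xs rfl hkey1
      obtain ⟨g, b, r0, hr0, hgX, hbB, hdisj2⟩ := IH _ hdlt Gd Xs B rfl hkey2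
      have hnorm1 : ∀ i, ∃ (z : V) (_ : z ∈ Xs) (qq : Gd.Walk (a i) z), qq.IsPath ∧
          (∀ t ∈ qq.support, t ∈ (p i).support) ∧ (∀ t ∈ qq.support, t ∈ Xs → t = z) := by
        intro i
        obtain ⟨z, hz, w₁, hsubl, _, hfirst⟩ := exists_prefix_firstHit (p i)
          ⟨f i, SimpleGraph.Walk.end_mem_support _, hfX i⟩
        exact ⟨z, hz, w₁,
          (SimpleGraph.Walk.isPath_def _).2 (List.Nodup.sublist hsubl (hp i).support_nodup),
          fun t ht => hsubl.mem ht, hfirst⟩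
      choose f' hf'X q hq hqsub hqfirst using hnorm1
      have hnorm2 : ∀ j, ∃ (z : V) (_ : z ∈ Xs) (rr : Gd.Walk z (b j)), rr.IsPath ∧
          (∀ t ∈ rr.support, t ∈ (r0 j).support) ∧ (∀ t ∈ rr.support, t ∈ Xs → t = z) := by
        intro j
        obtain ⟨z, hz, w₁, hsubl, _, hfirst⟩ := exists_prefix_firstHit (r0 j).reverse
          ⟨g j, by simp, hgX j⟩
        refine ⟨z, hz, w₁.reverse, ?_, ?_, ?_⟩
        · rw [SimpleGraph.Walk.isPath_def, SimpleGraph.Walk.support_reverse]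
          refine List.nodup_reverse.2 (List.Nodup.sublist hsubl ?_)
          rw [SimpleGraph.Walk.support_reverse]
          exact List.nodup_reverse.2 (hr0 j).support_nodup
        · intro t ht
          rw [SimpleGraph.Walk.support_reverse, List.mem_reverse] at ht
          have := hsubl.mem ht
          rw [SimpleGraph.Walk.support_reverse, List.mem_reverse] at this
          exact this
        · intro t ht htX
          rw [SimpleGraph.Walk.support_reverse, List.mem_reverse] at ht
          exact hfirst t ht htX
      choose g' hg'X r hr hrsub hrfirst using hnorm2
      have hf'inj : Function.Injective f' := by
        intro i j hij
        by_contra hne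
        have h1 : f' i ∈ (p i).support := hqsub i _ (SimpleGraph.Walk.end_mem_support (q i))
        have h2 : f' j ∈ (p j).support := hqsub j _ (SimpleGraph.Walk.end_mem_support (q j))
        rw [← hij] at h2
        exact hdisj1 i j hne (f' i) h1 h2
      have hg'inj : Function.Injective g' := by
        intro i j hij
        by_contra hne
        have h1 : g' i ∈ (r0 i).support := hrsub i _ (SimpleGraph.Walk.start_mem_support (r i))
        have h2 : g' j ∈ (r0 j).support := hrsub j _ (SimpleGraph.Walk.start_mem_support (r j))
        rw [← hij] at h2
        exact hdisj2 i j hne (g' i) h1 h2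
      have hg'surj := surj_of_inj_ncard hXk (Set.toFinite _) hg'inj hg'X
      have hσex : ∀ i, ∃ j, g' j = f' i := fun i => hg'surj (f' i) (hf'X i)
      choose σ hσ using hσex
      have hσinj : Function.Injective σ := fun i j h =>
        hf'inj ((hσ i).symm.trans (h ▸ hσ j))
      have noMeet : ∀ i j t, t ∈ (q i).support → t ∈ (r j).support → t ∈ Xs := by
        intro i j t hti htj
        by_contra htX
        have hnef : t ≠ f' i := fun h => htX (h ▸ hf'X i)
        have hneg : t ≠ g' j := fun h => htX (h ▸ hg'X j)
        set wglue := ((q i).takeUntil t hti).append ((r j).dropUntil t htj) with hwglue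
        have havoid : ∀ z ∈ wglue.support, z ∉ Xs := by
          intro z hz hzX
          rcases (SimpleGraph.Walk.mem_support_append_iff _ _).1 hz with h | h
          · have hzq : z ∈ (q i).support := SimpleGraph.Walk.support_takeUntil_subset _ _ h
            have hzf : z = f' i := hqfirst i z hzq hzX
            subst hzf
            exact end_not_mem_takeUntil (q i) (hq i) hti hnef h
          · have hzr : z ∈ (r j).support := SimpleGraph.Walk.support_dropUntil_subset _ _ h
            have hzg : z = g' j := hrfirst j z hzr hzX
            subst hzg
            have hsup : (r j).dropUntil t htj = ((r j).dropUntil t htj) := rfl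
            have hcons := ((r j).dropUntil t htj).support_eq_cons
            rw [hcons] at h
            rcases List.mem_cons.1 h with h' | h'
            · exact hneg h'.symm
            · exact start_not_mem_dropUntil (r j) (hr j) htj (fun hh => hneg hh) h'
        obtain ⟨w', hw'⟩ := htransf wglue
        obtain ⟨z, hz, hzX⟩ := hXcut w' (haA i) (hbB j)
        rw [hw'] at hz
        exact havoid z hz hzX
      have gluesup : ∀ i z, z ∈ ((q i).append ((r (σ i)).copy (hσ i) rfl)).support → z ∈ (q i).support ∨ z ∈ (r (σ i)).support := by
        intro i z hz
        rcases (SimpleGraph.Walk.mem_support_append_iff _ _).1 hz with h | h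
        · exact .inl h
        · rw [SimpleGraph.Walk.support_copy] at h
          exact .inr h
      have glueIsPath : ∀ i, ((q i).append ((r (σ i)).copy (hσ i) rfl)).IsPath := by
        intro i
        rw [SimpleGraph.Walk.isPath_def, SimpleGraph.Walk.support_append,
          SimpleGraph.Walk.support_copy]
        refine List.Nodup.append (hq i).support_nodup
          (List.Nodup.sublist (List.tail_sublist _) (hr (σ i)).support_nodup) ?_
        intro z hzq hzt
        have hzr : z ∈ (r (σ i)).support := List.mem_of_mem_tail hzt
        have hzX : z ∈ Xs := noMeet i (σ i) z hzq hzr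
        have h1 : z = f' i := hqfirst i z hzq hzX
        have h2 : z = g' (σ i) := hrfirst (σ i) z hzr hzX
        have hcons := (r (σ i)).support_eq_cons
        have : (r (σ i)).support.Nodup := (hr (σ i)).support_nodup
        rw [hcons] at this
        rw [h2] at hzt
        exact (List.nodup_cons.1 this).1 hzt
      have hWex : ∀ i, ∃ w' : G.Walk (a i) (b (σ i)),
          w'.support = ((q i).append ((r (σ i)).copy (hσ i) rfl)).support :=
        fun i => htransf _
      choose W hW using hWex
      refine ⟨a, fun i => b (σ i), W, ?_, haA, fun i => hbB (σ i), ?_⟩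
      · intro i
        rw [SimpleGraph.Walk.isPath_def, hW i]
        exact (glueIsPath i).support_nodup
      · intro i j hij z hz hz'
        rw [hW i] at hz
        rw [hW j] at hz'
        rcases gluesup i z hz with h1 | h1 <;> rcases gluesup j z hz' with h2 | h2
        · exact hdisj1 i j hij z (hqsub i z h1) (hqsub j z h2)
        · have hzX : z ∈ Xs := noMeet i (σ j) z h1 h2
          have e1 : z = f' i := hqfirst i z h1 hzX
          have e2 : z = g' (σ j) := hrfirst (σ j) z h2 hzX
          rw [hσ j] at e2
          exact hij (hf'inj (e1.symm.trans e2))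
        · have hzX : z ∈ Xs := noMeet j (σ i) z h2 h1
          have e1 : z = f' j := hqfirst j z h2 hzX
          have e2 : z = g' (σ i) := hrfirst (σ i) z h1 hzX
          rw [hσ i] at e2
          exact hij (hf'inj (e2.symm.trans e1))
        · have hσij : σ i ≠ σ j := fun h => hij (hσinj h)
          exact hdisj2 (σ i) (σ j) hσij z (hrsub (σ i) z h1) (hrsub (σ j) z h2)

end Menger

section Vertex

variable {G : SimpleGraph V} {S : Set V} {a b : V} {k : ℕ}

lemma ncard_range_fin {α : Type*} {f : Fin k → α} (hinj : Function.Injective f) :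
    (Set.range f).ncard = k := by
  rw [← Set.image_univ, Set.ncard_image_of_injective _ hinj, Set.ncard_univ,
    Nat.card_eq_fintype_card, Fintype.card_fin]

/-- easy direction of Menger. -/
lemma le_ncard_of_separates [Finite V] (hS : SeparatesPair G S a b)
    (hp : HasIntDisjPaths G a b k) : k ≤ S.ncard := by
  obtain ⟨haS, hbS, hno⟩ := hS
  rw [not_reachOutside_iff] at hno
  obtain ⟨f, hfinj, hfint⟩ := hp
  have hpick : ∀ i : Fin k, ∃ z, z ∈ S ∧ z ∈ (f i).1.support := by
    intro i
    obtain ⟨z, hz, hzS⟩ := hno (f i).1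
    exact ⟨z, hzS, hz⟩
  choose z hzS hzsup using hpick
  have hzinj : Function.Injective z := by
    intro i j hij
    by_contra hne
    rcases hfint i j hne (z i) (hzsup i) (hij ▸ hzsup j) with h | h
    · exact haS (h ▸ hzS i)
    · exact hbS (h ▸ hzS i)
  have h1 : Set.range z ⊆ S := by rintro _ ⟨i, rfl⟩; exact hzS i
  calc k = (Set.range z).ncard := (ncard_range_fin hzinj).symm
    _ ≤ S.ncard := Set.ncard_le_ncard h1 (Set.toFinite _)

/-- hard direction of Menger, vertex form. -/
lemma mengerVertex [Finite V] (hab : a ≠ b) (hnadj : ¬ G.Adj a b)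
    (h : ∀ S : Set V, SeparatesPair G S a b → k ≤ S.ncard) : HasIntDisjPaths G a b k := by
  classical
  set A : Set V := {v | G.Adj a v} with hA
  set B : Set V := {v | G.Adj b v} with hB
  have hcut : ∀ T : Set V, Cut G A B T → k ≤ T.ncard := by
    intro T hT
    have hsep : SeparatesPair G (T \ {a, b}) a b := by
      refine ⟨by simp, by simp, ?_⟩
      rw [not_reachOutside_iff]
      intro w
      have hpb : w.bypass.IsPath := SimpleGraph.Walk.bypass_isPath w
      have hnn : ¬ w.bypass.Nil := SimpleGraph.Walk.not_nil_of_ne hab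
      obtain ⟨c, hadj, q, hq⟩ := SimpleGraph.Walk.not_nil_iff.1 hnn
      rw [hq] at hpb
      have hqpath : q.IsPath := ((SimpleGraph.Walk.cons_isPath_iff _ _).1 hpb).1
      have haq : a ∉ q.support := ((SimpleGraph.Walk.cons_isPath_iff _ _).1 hpb).2
      have hnn2 : ¬ q.reverse.Nil := by
        refine SimpleGraph.Walk.not_nil_of_ne ?_
        intro hbc
        refine hnadj ?_
        rw [hbc]
        exact hadj
      obtain ⟨d, hadj2, q2, hq2⟩ := SimpleGraph.Walk.not_nil_iff.1 hnn2
      have hsupq : q.reverse.support = b :: q2.support := by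
        rw [hq2, SimpleGraph.Walk.support_cons]
      have hbq2 : b ∉ q2.support := by
        have : q.reverse.support.Nodup :=
          ((SimpleGraph.Walk.isPath_reverse_iff q).2 hqpath).support_nodup
        rw [hsupq] at this
        exact (List.nodup_cons.1 this).1
      have hq2q : ∀ t, t ∈ q2.support → t ∈ q.support := by
        intro t ht
        have : t ∈ q.reverse.support := by rw [hsupq]; exact List.mem_cons_of_mem _ ht
        rwa [SimpleGraph.Walk.support_reverse, List.mem_reverse] at this
      obtain ⟨zz, hzz, hzzT⟩ := hT q2.reverse (by exact hadj) (by exact hadj2)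
      rw [SimpleGraph.Walk.support_reverse, List.mem_reverse] at hzz
      refine ⟨zz, ?_, hzzT, ?_⟩
      · have h1 : zz ∈ q.support := hq2q zz hzz
        have h2 : zz ∈ w.bypass.support := by
          rw [hq, SimpleGraph.Walk.support_cons]
          exact List.mem_cons_of_mem _ h1
        exact SimpleGraph.Walk.support_bypass_subset _ h2
      · simp only [Set.mem_insert_iff, Set.mem_singleton_iff]
        rintro (rfl | rfl)
        · exact haq (hq2q zz hzz)
        · exact hbq2 hzz
    calc k ≤ (T \ {a, b}).ncard := h _ hsep
      _ ≤ T.ncard := Set.ncard_le_ncard Set.diff_subset (Set.toFinite _)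
  obtain ⟨c, d, P, hP, hcA, hdB, hdisj⟩ := mengerSet G A B hcut
  have htrim : ∀ i, ∃ (c' d' : V) (m : G.Walk c' d'), G.Adj a c' ∧ G.Adj b d' ∧ m.IsPath ∧
      (∀ t ∈ m.support, t ∈ (P i).support) ∧ a ∉ m.support ∧ b ∉ m.support := by
    intro i
    have step1 : ∃ (c' : V) (m1 : G.Walk c' (d i)), G.Adj a c' ∧ m1.IsPath ∧
        (∀ t ∈ m1.support, t ∈ (P i).support) ∧ a ∉ m1.support := by
      by_cases haP : a ∈ (P i).support
      · have hdr : ((P i).dropUntil a haP).IsPath := (hP i).dropUntil haP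
        have hnn : ¬ ((P i).dropUntil a haP).Nil := by
          refine SimpleGraph.Walk.not_nil_of_ne ?_
          intro had
          exact hnadj (had ▸ (hdB i)).symm
        obtain ⟨c', hadj, q, hq⟩ := SimpleGraph.Walk.not_nil_iff.1 hnn
        rw [hq] at hdr
        refine ⟨c', q, hadj, ((SimpleGraph.Walk.cons_isPath_iff _ _).1 hdr).1, ?_, 
          ((SimpleGraph.Walk.cons_isPath_iff _ _).1 hdr).2⟩
        intro t ht
        refine SimpleGraph.Walk.support_dropUntil_subset _ haP ?_
        rw [hq, SimpleGraph.Walk.support_cons]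
        exact List.mem_cons_of_mem _ ht
      · exact ⟨c i, P i, hcA i, hP i, fun t ht => ht, haP⟩
    obtain ⟨c', m1, hac', hm1, hm1sub, ham1⟩ := step1
    by_cases hbP : b ∈ m1.support
    · have htk : (m1.takeUntil b hbP).IsPath := hm1.takeUntil hbP
      have hnn : ¬ (m1.takeUntil b hbP).reverse.Nil := by
        refine SimpleGraph.Walk.not_nil_of_ne ?_
        intro hbc
        refine hnadj ?_
        rw [hbc]
        exact hac'
      obtain ⟨d', hadj2, q2, hq2⟩ := SimpleGraph.Walk.not_nil_iff.1 hnn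
      have hsupq : (m1.takeUntil b hbP).reverse.support = b :: q2.support := by
        rw [hq2, SimpleGraph.Walk.support_cons]
      have hbq2 : b ∉ q2.support := by
        have hnd : (m1.takeUntil b hbP).reverse.support.Nodup :=
          ((SimpleGraph.Walk.isPath_reverse_iff _).2 htk).support_nodup
        rw [hsupq] at hnd
        exact (List.nodup_cons.1 hnd).1
      have hq2sub : ∀ t, t ∈ q2.support → t ∈ m1.support := by
        intro t ht
        have h1 : t ∈ (m1.takeUntil b hbP).reverse.support := by
          rw [hsupq]; exact List.mem_cons_of_mem _ ht
        rw [SimpleGraph.Walk.support_reverse, List.mem_reverse] at h1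
        exact SimpleGraph.Walk.support_takeUntil_subset _ hbP h1
      refine ⟨c', d', q2.reverse, hac', hadj2, ?_, ?_, ?_, ?_⟩
      · rw [SimpleGraph.Walk.isPath_reverse_iff]
        exact ((SimpleGraph.Walk.cons_isPath_iff _ _).1 (by
          rw [← hq2]; exact (SimpleGraph.Walk.isPath_reverse_iff _).2 htk)).1
      · intro t ht
        rw [SimpleGraph.Walk.support_reverse, List.mem_reverse] at ht
        exact hm1sub t (hq2sub t ht)
      · rw [SimpleGraph.Walk.support_reverse, List.mem_reverse]
        intro ha2
        exact ham1 (hq2sub a ha2)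
      · rw [SimpleGraph.Walk.support_reverse, List.mem_reverse]
        exact hbq2
    · exact ⟨c', d i, m1, hac', hdB i, hm1, hm1sub, ham1, hbP⟩
  choose c' d' m hac hbd hmpath hmsub hma hmb using htrim
  have hFsup : ∀ i, (SimpleGraph.Walk.cons (hac i)
      ((m i).append (.cons (hbd i).symm .nil))).support = a :: ((m i).support ++ [b]) := by
    intro i
    rw [SimpleGraph.Walk.support_cons, SimpleGraph.Walk.support_append]
    simp
  have hFpath : ∀ i, (SimpleGraph.Walk.cons (hac i)
      ((m i).append (.cons (hbd i).symm .nil))).IsPath := by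
    intro i
    rw [SimpleGraph.Walk.isPath_def, hFsup i]
    refine List.nodup_cons.2 ⟨?_, ?_⟩
    · intro ha
      rcases List.mem_append.1 ha with h | h
      · exact hma i h
      · exact hab (by simpa using h)
    · refine List.Nodup.append (hmpath i).support_nodup (List.nodup_singleton b) ?_
      intro t ht ht'
      rw [List.mem_singleton] at ht'
      subst ht'
      exact hmb i ht
  refine ⟨fun i => ⟨_, hFpath i⟩, ?_, ?_⟩
  · intro i j hij
    by_contra hne
    have hFeq : (SimpleGraph.Walk.cons (hac i) ((m i).append (.cons (hbd i).symm .nil))).support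
        = (SimpleGraph.Walk.cons (hac j) ((m j).append (.cons (hbd j).symm .nil))).support := by
      rw [show (SimpleGraph.Walk.cons (hac i) ((m i).append (.cons (hbd i).symm .nil)))
        = (SimpleGraph.Walk.cons (hac j) ((m j).append (.cons (hbd j).symm .nil))) from
        congrArg Subtype.val hij]
    rw [hFsup i, hFsup j] at hFeq
    have hci : c' i ∈ a :: ((m j).support ++ [b]) := by
      rw [← hFeq]
      exact List.mem_cons_of_mem _ (List.mem_append_left _ ((m i).start_mem_support))
    rcases List.mem_cons.1 hci with h | h
    · exact hma i (h ▸ (m i).start_mem_support)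
    · rcases List.mem_append.1 h with h' | h'
      · exact hdisj i j hne (c' i) (hmsub i _ ((m i).start_mem_support)) (hmsub j _ h')
      · exact hmb i ((by simpa using h' : c' i = b) ▸ (m i).start_mem_support)
  · intro i j hij t hti htj
    by_cases hta : t = a
    · exact .inl hta
    by_cases htb : t = b
    · exact .inr htb
    exfalso
    have h1 : t ∈ (m i).support := by
      have := hti
      rw [hFsup i] at this
      rcases List.mem_cons.1 this with h | h
      · exact absurd h hta
      · rcases List.mem_append.1 h with h' | h'
        · exact h'
        · exact absurd (by simpa using h') htb
    have h2 : t ∈ (m j).support := by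
      have := htj
      rw [hFsup j] at this
      rcases List.mem_cons.1 this with h | h
      · exact absurd h hta
      · rcases List.mem_append.1 h with h' | h'
        · exact h'
        · exact absurd (by simpa using h') htb
    exact hdisj i j hij t (hmsub i t h1) (hmsub j t h2)

end Vertex


section Fragments

variable {G : SimpleGraph V} {X : Set V} {d : ℕ}

/-- any walk from `X` to `fragCompl G X` meets `nbhd G X`. -/
lemma cut_nbhd : ∀ {u v : V} (w : G.Walk u v), u ∈ X → v ∈ fragCompl G X →
    ∃ z ∈ w.support, z ∈ nbhd G X := by
  intro u v w
  induction w with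
  | nil =>
    intro hu hv
    exact absurd (Set.mem_union_left _ hu) hv
  | @cons a b c hadj p ih =>
    intro hu hv
    by_cases hb : b ∈ X
    · obtain ⟨z, hz, hzN⟩ := ih hb hv
      exact ⟨z, by simp [hz], hzN⟩
    · exact ⟨b, by simp, hb, a, hu, hadj⟩

lemma mem_frag_not_nbhd (hu : u ∈ X) : u ∉ nbhd G X := fun h => h.1 hu

lemma frag_isdSeparator (hX : IsFragment G d X) : IsdSeparator G d (nbhd G X) := by
  obtain ⟨⟨x₀, hx₀⟩, hXn, ⟨c₀, hc₀⟩⟩ := hX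
  refine ⟨hXn, x₀, c₀, mem_frag_not_nbhd hx₀, fun h => hc₀ (Set.mem_union_right _ h), ?_⟩
  rw [not_reachOutside_iff]
  intro w
  exact cut_nbhd w hx₀ hc₀

end Fragments

theorem stmt5 [Fintype V] (G : SimpleGraph V) (d : ℕ) (hG : dConnected G d)
    (hnc : ∀ S T : Set V, IsdSeparator G d S → IsdSeparator G d T → ¬ Crosses G S T)
    (X : Set V) (hX : IsFragment G d X)
    (hmin : ∀ Y : Set V, IsFragment G d Y → Y ⊆ X → Y = X) :
    IsBlock G (d + 1) (X ∪ nbhd G X) := by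
  classical
  obtain ⟨hcard, hconn⟩ := hG
  obtain ⟨hXne, hXn, hXc⟩ := hX
  set N := nbhd G X with hN
  have hNsep : IsdSeparator G d N := frag_isdSeparator ⟨hXne, hXn, hXc⟩
  constructor
  · -- pairwise condition
    intro a haW b hbW hab
    by_cases hadj : G.Adj a b
    · exact .inl hadj
    refine .inr (mengerVertex hab hadj ?_)
    intro S hsep
    by_contra hlt
    push_neg at hlt
    have hSsep : IsSeparator G S := ⟨a, b, hsep.1, hsep.2.1, hsep.2.2⟩
    have hd : d ≤ S.ncard := by
      by_contra hh
      push_neg at hh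
      exact hconn S hh hSsep
    have hSd : S.ncard = d := by omega
    have hncross : ¬ Crosses G N S := hnc N S hNsep ⟨hSd, hSsep⟩
    -- the core uncrossing argument
    have core : ∀ m m' : V, m ∈ X → m' ∈ X ∪ N → m ∉ S → m' ∉ S →
        ¬ ReachOutside G S m m' → ({z | ReachOutside G S m z} ∩ N = ∅) → False := by
      intro m m' hmX hm'XN hmS hm'S hmm' hCN
      set C := {z | ReachOutside G S m z} with hC
      have hCnotN : ∀ z, z ∈ C → z ∉ N := by
        intro z hz hzN
        exact (Set.eq_empty_iff_forall_notMem.1 hCN z) ⟨hz, hzN⟩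
      have hCm : m ∈ C := reachOutside_refl hmS
      have hCX : C ⊆ X := by
        intro z hz
        by_contra hzX
        obtain ⟨w, hw⟩ := walk_of_reachOutside hz
        have hallC : ∀ t ∈ w.support, t ∈ C := fun t ht => reachOutside_mem_support w hw t ht
        have hzF : z ∈ fragCompl G X := by
          intro hmem
          rcases hmem with h | h
          · exact hzX h
          · exact hCnotN z hz h
        obtain ⟨t, htw, htN⟩ := cut_nbhd w hmX hzF
        exact hCnotN t (hallC t htw) htN
      have hnbC : nbhd G C ⊆ S := by
        rintro v ⟨hvC, z, hzC, hzv⟩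
        by_contra hvS
        have hzS : z ∉ S := by
          obtain ⟨_, hz2, -⟩ := hzC
          exact hz2
        refine hvC (reachOutside_trans hzC (reachOutside_of_walk (.cons hzv .nil) ?_))
        intro t ht
        rcases (by simpa using ht : t = z ∨ t = v) with rfl | rfl
        · exact hzS
        · exact hvS
      have hm'C : m' ∉ C := hmm'
      have hm'nb : m' ∉ nbhd G C := fun h => hm'S (hnbC h)
      have hm'F : m' ∈ fragCompl G C := by
        intro hmem
        rcases hmem with h | h
        · exact hm'C h
        · exact hm'nb h
      have hfragC : IsFragment G d C := by
        refine ⟨⟨m, hCm⟩, ?_, ⟨m', hm'F⟩⟩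
        have hsep2 : IsSeparator G (nbhd G C) := by
          refine ⟨m, m', mem_frag_not_nbhd hCm, hm'nb, ?_⟩
          rw [not_reachOutside_iff]
          intro w
          exact cut_nbhd w hCm hm'F
        have h1 : d ≤ (nbhd G C).ncard := by
          by_contra hh
          push_neg at hh
          exact hconn _ hh hsep2
        have h2 : (nbhd G C).ncard ≤ S.ncard := Set.ncard_le_ncard hnbC (Set.toFinite _)
        omega
      have hCXeq : C = X := hmin C hfragC hCX
      have hNsub : N ⊆ S := by
        rw [hN, ← hCXeq]
        exact hnbC
      have hNS : N = S := Set.eq_of_subset_of_ncard_le hNsub (by rw [hSd, hXn]) (Set.toFinite _)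
      rcases hm'XN with h | h
      · rw [← hCXeq] at h
        exact hm'C h
      · rw [hNS] at h
        exact hm'S h
    -- the two components cannot both meet N
    have hdicho : ({z | ReachOutside G S a z} ∩ N = ∅) ∨
        ({z | ReachOutside G S b z} ∩ N = ∅) := by
      by_contra hcon
      push_neg at hcon
      obtain ⟨h1, h2⟩ := hcon
      obtain ⟨n₁, hn₁C, hn₁N⟩ := h1
      obtain ⟨n₂, hn₂C, hn₂N⟩ := h2
      have hn₁S : n₁ ∉ S := by obtain ⟨_, h', -⟩ := hn₁C; exact h'
      have hn₂S : n₂ ∉ S := by obtain ⟨_, h', -⟩ := hn₂C; exact h'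
      refine hncross ⟨n₁, n₂, hn₁N, hn₂N, hn₁S, hn₂S, ?_⟩
      intro hr
      exact hsep.2.2 (reachOutside_trans hn₁C (reachOutside_trans hr
        (reachOutside_symm hn₂C)))
    rcases haW with haX | haN
    · rcases hdicho with hD | hD
      · exact core a b haX hbW hsep.1 hsep.2.1 hsep.2.2 hD
      · rcases hbW with hbX | hbN
        · exact core b a hbX (.inl haX) hsep.2.1 hsep.1
            (fun h => hsep.2.2 (reachOutside_symm h)) hD
        · exact (Set.eq_empty_iff_forall_notMem.1 hD b)
            ⟨reachOutside_refl hsep.2.1, hbN⟩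
    · rcases hbW with hbX | hbN
      · rcases hdicho with hD | hD
        · exact (Set.eq_empty_iff_forall_notMem.1 hD a)
            ⟨reachOutside_refl hsep.1, haN⟩
        · exact core b a hbX (.inr haN) hsep.2.1 hsep.1
            (fun h => hsep.2.2 (reachOutside_symm h)) hD
      · exact hncross ⟨a, b, haN, hbN, hsep.1, hsep.2.1, hsep.2.2⟩
  · -- maximality
    intro W' hsub hprop
    refine Set.Subset.antisymm ?_ hsub
    intro v hv
    by_contra hvW
    have hvF : v ∈ fragCompl G X := hvW
    obtain ⟨x₀, hx₀⟩ := hXne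
    have hx₀W : x₀ ∈ W' := hsub (.inl hx₀)
    have hne : x₀ ≠ v := by
      rintro rfl
      exact hvF (.inl hx₀)
    rcases hprop x₀ hx₀W v hv hne with hadj | hpaths
    · exact hvF (.inr ⟨fun h => hvF (.inl h), x₀, hx₀, hadj⟩)
    · have hsepN : SeparatesPair G N x₀ v := by
        refine ⟨mem_frag_not_nbhd hx₀, fun h => hvF (.inr h), ?_⟩
        rw [not_reachOutside_iff]
        intro w
        exact cut_nbhd w hx₀ hvF
      have := le_ncard_of_separates hsepN hpaths
      rw [hXn] at this
      omega
end Infra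
end

section
/- Let X be a d-fragment of a graph G with S = N_G(X), and let (G,p) be a d-dimensional framework such that p(S) is affinely independent. Define q by q(v) = p(v) for v ∈ X ∪ S and q(v) = the reflection of p(v) in the affine hyperplane spanned by p(S) for v in the complement X̄. Then (G,q) is equivalent to (G,p), i.e., ‖q(a) − q(b)‖ = ‖p(a) − p(b)‖ for every edge ab of G. -/
variable {V : Type*}

variable {V : Type*}

/-- a `d`-dimensional framework `(G,p)` is generic if the coordinates of the points are
algebraically independent over `ℚ`. -/
def Genericp (d : ℕ) (p : V → EuclideanSpace ℝ (Fin d)) : Prop :=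
  AlgebraicIndependent ℚ (fun vi : V × Fin d => p vi.1 vi.2)

/-- `(G,p)` and `(G,q)` are equivalent: corresponding edges have equal lengths. -/
def FEquiv (G : SimpleGraph V) (d : ℕ) (p q : V → EuclideanSpace ℝ (Fin d)) : Prop :=
  ∀ a b, G.Adj a b → dist (p a) (p b) = dist (q a) (q b)

/-- `(G,p)` and `(G,q)` are congruent. -/
def FCong {d : ℕ} (p q : V → EuclideanSpace ℝ (Fin d)) : Prop :=
  ∀ a b, dist (p a) (p b) = dist (q a) (q b)

/-- orthogonal reflection in the affine span of `s` (the identity for `s = ∅`). -/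
noncomputable def reflSpan {d : ℕ} (s : Set (EuclideanSpace ℝ (Fin d))) :
    EuclideanSpace ℝ (Fin d) → EuclideanSpace ℝ (Fin d) :=
  haveI := Classical.propDecidable s.Nonempty
  if h : s.Nonempty then
    haveI : Nonempty s := h.to_subtype
    fun x => EuclideanGeometry.reflection (affineSpan ℝ s) x
  else id

/-- `(G,p)` is rigid. -/
def RigidFw (G : SimpleGraph V) (d : ℕ) (p : V → EuclideanSpace ℝ (Fin d)) : Prop :=
  ∃ ε > (0 : ℝ), ∀ q, FEquiv G d p q → (∀ w, dist (p w) (q w) < ε) → FCong p q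

/-- `G` is rigid in `ℝ^d`. -/
def RigidGraph (G : SimpleGraph V) (d : ℕ) : Prop :=
  ∀ p, Genericp d p → RigidFw G d p

/-- `G` is globally rigid in `ℝ^d`. -/
def GloballyRigidGraph (G : SimpleGraph V) (d : ℕ) : Prop :=
  ∀ p, Genericp d p → ∀ q, FEquiv G d p q → FCong p q

/-- `{u,v}` is globally linked in `G` in `ℝ^d`. -/
def GloballyLinked (G : SimpleGraph V) (d : ℕ) (u v : V) : Prop :=
  ∀ p q, Genericp d p → FEquiv G d p q → dist (p u) (p v) = dist (q u) (q v)

/-- the partial reflection corresponding to the fragment `X`: points of the complement of `X`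
are reflected in the affine hyperplane spanned by the image of `N_G(X)`. -/
noncomputable def partialRefl (G : SimpleGraph V) (X : Set V) (d : ℕ)
    (p : V → EuclideanSpace ℝ (Fin d)) : V → EuclideanSpace ℝ (Fin d) :=
  fun w => haveI := Classical.propDecidable (w ∈ X ∪ nbhd G X)
    if w ∈ X ∪ nbhd G X then p w else reflSpan (p '' nbhd G X) (p w)

lemma reflSpan_dist {d : ℕ} (s : Set (EuclideanSpace ℝ (Fin d)))
    (x y : EuclideanSpace ℝ (Fin d)) :
    dist (reflSpan s x) (reflSpan s y) = dist x y := by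
  classical
  unfold reflSpan
  split
  · next h =>
    haveI : Nonempty s := h.to_subtype
    exact (EuclideanGeometry.reflection (affineSpan ℝ s)).dist_map x y
  · rfl

lemma reflSpan_fixed {d : ℕ} {s : Set (EuclideanSpace ℝ (Fin d))}
    {x : EuclideanSpace ℝ (Fin d)} (hx : x ∈ s) : reflSpan s x = x := by
  classical
  unfold reflSpan
  split
  · next h =>
    haveI : Nonempty s := h.to_subtype
    exact (EuclideanGeometry.reflection_eq_self_iff _).2 (mem_affineSpan ℝ hx)
  · rfl

theorem stmt10 (G : SimpleGraph V) (d : ℕ) (X : Set V) (hX : IsFragment G d X)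
    (p : V → EuclideanSpace ℝ (Fin d))
    (hadm : AffineIndependent ℝ (fun s : ↥(nbhd G X) => p ↑s)) :
    FEquiv G d p (partialRefl G X d p) := by
  classical
  intro a b hab
  unfold partialRefl
  by_cases ha : a ∈ X ∪ nbhd G X <;> by_cases hb : b ∈ X ∪ nbhd G X <;>
    simp only [ha, hb, if_pos, if_neg, if_true, if_false]
  · -- a in, b out: a must be in nbhd G X
    have haX : a ∉ X := by
      intro haX
      simp only [Set.mem_union, not_or] at hb
      exact hb.2 ⟨hb.1, a, haX, hab⟩
    have haS : a ∈ nbhd G X := ha.resolve_left haX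
    calc dist (p a) (p b)
        = dist (reflSpan (p '' nbhd G X) (p a)) (reflSpan (p '' nbhd G X) (p b)) :=
          (reflSpan_dist _ _ _).symm
      _ = dist (p a) (reflSpan (p '' nbhd G X) (p b)) := by
          rw [reflSpan_fixed (Set.mem_image_of_mem p haS)]
  · -- a out, b in: b must be in nbhd G X
    have hbX : b ∉ X := by
      intro hbX
      simp only [Set.mem_union, not_or] at ha
      exact ha.2 ⟨ha.1, b, hbX, hab.symm⟩
    have hbS : b ∈ nbhd G X := hb.resolve_left hbX
    calc dist (p a) (p b)
        = dist (reflSpan (p '' nbhd G X) (p a)) (reflSpan (p '' nbhd G X) (p b)) :=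
          (reflSpan_dist _ _ _).symm
      _ = dist (reflSpan (p '' nbhd G X) (p a)) (p b) := by
          rw [reflSpan_fixed (Set.mem_image_of_mem p hbS)]
  · rw [reflSpan_dist]
end

section
/- Every d-connected chordal graph on at least d+1 vertices has a globally rigid gluing construction in ℝ^d: it can be built by a sequence of graphs each of which is either globally rigid in ℝ^d on at least d+1 vertices, or the union of two earlier graphs in the sequence, each with strictly smaller vertex set, intersecting in at least d vertices. -/
variable {V : Type*}

variable {V : Type*}

/-- `G` is chordal: it has no induced cycle of length at least four. -/
def IsChordal (G : SimpleGraph V) : Prop :=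
  ∀ n : ℕ, 4 ≤ n → IsEmpty (SimpleGraph.cycleGraph n ↪g G)

/-- a globally rigid gluing construction in `ℝ^d` of a subgraph of `G`: the subgraph is either
globally rigid in `ℝ^d` on at least `d+1` vertices, or the union of two previously constructed
subgraphs, each with strictly smaller vertex set, intersecting in at least `d` vertices. -/
inductive GluingConstr (G : SimpleGraph V) (d : ℕ) : G.Subgraph → Prop
  | base (H : G.Subgraph) (h1 : d + 1 ≤ H.verts.ncard)
      (h2 : GloballyRigidGraph H.coe d) : GluingConstr G d H
  | glue (H₁ H₂ : G.Subgraph) (hc₁ : GluingConstr G d H₁) (hc₂ : GluingConstr G d H₂)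
      (h3 : H₁.verts ≠ H₁.verts ∪ H₂.verts) (h4 : H₂.verts ≠ H₁.verts ∪ H₂.verts)
      (h5 : d ≤ (H₁.verts ∩ H₂.verts).ncard) : GluingConstr G d (H₁ ⊔ H₂)

namespace Stmt16Aux


open SimpleGraph

variable {V : Type*} {G : SimpleGraph V}

/-- connectivity within a vertex set -/
def Conn (G : SimpleGraph V) (S : Set V) (u v : V) : Prop :=
  ∃ p : G.Walk u v, ∀ z ∈ p.support, z ∈ S

lemma Conn.mem_left {S : Set V} {u v : V} (h : Conn G S u v) : u ∈ S := by
  obtain ⟨p, hp⟩ := h; exact hp u p.start_mem_support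

lemma Conn.mem_right {S : Set V} {u v : V} (h : Conn G S u v) : v ∈ S := by
  obtain ⟨p, hp⟩ := h; exact hp v p.end_mem_support

lemma Conn.refl {S : Set V} {u : V} (h : u ∈ S) : Conn G S u u :=
  ⟨.nil, by simp [h]⟩

lemma Conn.symm {S : Set V} {u v : V} (h : Conn G S u v) : Conn G S v u := by
  obtain ⟨p, hp⟩ := h
  exact ⟨p.reverse, fun z hz => hp z (by simpa [Walk.support_reverse] using hz)⟩

lemma Conn.trans {S : Set V} {u v w : V} (h1 : Conn G S u v) (h2 : Conn G S v w) :
    Conn G S u w := by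
  obtain ⟨p, hp⟩ := h1; obtain ⟨q, hq⟩ := h2
  refine ⟨p.append q, fun z hz => ?_⟩
  rcases (Walk.mem_support_append_iff _ _).1 hz with h | h
  exacts [hp z h, hq z h]

lemma Conn.mono {S S' : Set V} (hS : S ⊆ S') {u v : V} (h : Conn G S u v) : Conn G S' u v := by
  obtain ⟨p, hp⟩ := h; exact ⟨p, fun z hz => hS (hp z hz)⟩

lemma Conn.adj_right {S : Set V} {u v w : V} (h : Conn G S u v) (ha : G.Adj v w) (hw : w ∈ S) :
    Conn G S u w :=
  h.trans ⟨.cons ha .nil, by simp [h.mem_right, hw]⟩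

lemma Conn.cons_left {S : Set V} {u v w : V} (hu : u ∈ S) (ha : G.Adj u v) (h : Conn G S v w) :
    Conn G S u w :=
  ((h.symm).adj_right ha.symm hu).symm

/-- every vertex on a witnessing walk is connected to the start -/
lemma Conn.of_support {S : Set V} {u v : V} (p : G.Walk u v) (hp : ∀ z ∈ p.support, z ∈ S)
    {w : V} (hw : w ∈ p.support) : Conn G S u w := by
  classical
  exact ⟨p.takeUntil w hw, fun z hz => hp z (Walk.support_takeUntil_subset _ _ hz)⟩

lemma conn_self {S : Set V} {c z : V} (h : Conn G S c z) : Conn G {w | Conn G S c w} c z := by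
  obtain ⟨p, hp⟩ := h
  exact ⟨p, fun w hw => Conn.of_support p hp hw⟩



open SimpleGraph

variable {V : Type*} {G : SimpleGraph V}

/-- prefix of a walk by index -/
def takeW {u v : V} : (p : G.Walk u v) → (n : ℕ) → G.Walk u (p.getVert n)
  | .nil, _ => .nil
  | .cons _ _, 0 => .nil
  | .cons h q, n + 1 => .cons h (takeW q n)

/-- suffix of a walk by index -/
def dropW {u v : V} : (p : G.Walk u v) → (n : ℕ) → G.Walk (p.getVert n) v
  | .nil, _ => .nil
  | .cons h q, 0 => .cons h q
  | .cons _ q, n + 1 => dropW q n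

lemma length_takeW {u v : V} (p : G.Walk u v) (n : ℕ) :
    (takeW p n).length = min n p.length := by
  induction p generalizing n with
  | nil => simp [takeW]
  | cons h q ih =>
    cases n with
    | zero => simp [takeW]; rfl
    | succ n => simp [takeW, ih, Nat.succ_min_succ]

lemma length_dropW {u v : V} (p : G.Walk u v) (n : ℕ) :
    (dropW p n).length = p.length - n := by
  induction p generalizing n with
  | nil => simp [dropW]
  | cons h q ih =>
    cases n with
    | zero => simp [dropW]; rfl
    | succ n => simpa [dropW] using ih n

lemma support_takeW {u v : V} (p : G.Walk u v) (n : ℕ) :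
    ∀ z ∈ (takeW p n).support, z ∈ p.support := by
  induction p generalizing n with
  | nil => simp [takeW]
  | cons h q ih =>
    cases n with
    | zero => intro z hz; obtain rfl := List.mem_singleton.1 hz; exact Walk.start_mem_support _
    | succ n =>
      intro z hz
      replace hz : z = _ ∨ z ∈ (takeW q n).support := List.mem_cons.1 hz
      simp only [Walk.support_cons, List.mem_cons]
      rcases hz with rfl | hz
      · exact Or.inl rfl
      · exact Or.inr (ih n z hz)

lemma support_dropW {u v : V} (p : G.Walk u v) (n : ℕ) :
    ∀ z ∈ (dropW p n).support, z ∈ p.support := by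
  induction p generalizing n with
  | nil => exact fun z hz => hz
  | cons h q ih =>
    cases n with
    | zero => exact fun z hz => hz
    | succ n =>
      intro z hz
      simp only [Walk.support_cons, List.mem_cons]
      exact Or.inr (ih n z hz)

lemma getVert_mem_support' {u v : V} (p : G.Walk u v) (n : ℕ) : p.getVert n ∈ p.support := by
  induction p generalizing n with
  | nil => simp [Walk.getVert]
  | cons h q ih =>
    cases n with
    | zero => simp [Walk.getVert]
    | succ n => simp only [Walk.getVert_cons_succ, Walk.support_cons, List.mem_cons]
                exact Or.inr (ih n)

lemma IsPath.getVert_inj {u v : V} {p : G.Walk u v} (hp : p.IsPath) :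
    ∀ {i j : ℕ}, i ≤ p.length → j ≤ p.length → p.getVert i = p.getVert j → i = j := by
  induction p with
  | nil => intro i j hi hj _; simp at hi hj; omega
  | cons h q ih =>
    intro i j hi hj hij
    have hq : q.IsPath := (SimpleGraph.Walk.cons_isPath_iff _ _).1 hp |>.1
    have hu : _ ∉ q.support := ((SimpleGraph.Walk.cons_isPath_iff _ _).1 hp).2
    cases i with
    | zero =>
      cases j with
      | zero => rfl
      | succ j =>
        exfalso
        rw [Walk.getVert_zero, Walk.getVert_cons_succ] at hij
        exact hu (hij ▸ getVert_mem_support' q j)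
    | succ i =>
      cases j with
      | zero =>
        exfalso
        rw [Walk.getVert_zero, Walk.getVert_cons_succ] at hij
        exact hu (hij ▸ getVert_mem_support' q i)
      | succ j =>
        rw [Walk.getVert_cons_succ, Walk.getVert_cons_succ] at hij
        simp only [Walk.length_cons] at hi hj
        exact congrArg Nat.succ (ih hq (by omega) (by omega) hij)

/-- existence of a shortest (hence chord-free) path within a vertex set -/
lemma exists_induced_path {P : Set V} {a b : V} (hab : a ≠ b) (hnadj : ¬ G.Adj a b)
    (hconn : ∃ w : G.Walk a b, ∀ z ∈ w.support, z ∈ P) :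
    ∃ p : G.Walk a b, p.IsPath ∧ (∀ z ∈ p.support, z ∈ P) ∧ 2 ≤ p.length ∧
      (∀ i j, i ≤ p.length → j ≤ p.length → G.Adj (p.getVert i) (p.getVert j) →
        j = i + 1 ∨ i = j + 1) := by
  classical
  set SS : Set ℕ := {n | ∃ w : G.Walk a b, (∀ z ∈ w.support, z ∈ P) ∧ w.length = n} with hSS
  have hne : SS.Nonempty := by
    obtain ⟨w, hw⟩ := hconn
    exact ⟨w.length, w, hw, rfl⟩
  obtain ⟨w₀, hw₀P, hw₀len⟩ := Nat.sInf_mem hne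
  have hmin : ∀ w : G.Walk a b, (∀ z ∈ w.support, z ∈ P) → sInf SS ≤ w.length := fun w hw =>
    Nat.sInf_le ⟨w, hw, rfl⟩
  set p := w₀.bypass with hpdef
  have hpP : ∀ z ∈ p.support, z ∈ P := fun z hz => hw₀P z (Walk.support_bypass_subset _ hz)
  have hplen : p.length = sInf SS :=
    le_antisymm (hw₀len ▸ Walk.length_bypass_le _) (hmin p hpP)
  have hpath : p.IsPath := Walk.bypass_isPath _
  have hmin' : ∀ w : G.Walk a b, (∀ z ∈ w.support, z ∈ P) → p.length ≤ w.length := by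
    rw [hplen]; exact hmin
  have hlen2 : 2 ≤ p.length := by
    rcases Nat.lt_or_ge p.length 2 with h | h
    · interval_cases hl : p.length
      · exact absurd (Walk.eq_of_length_eq_zero hl) hab
      · exfalso
        have := p.adj_getVert_succ (i := 0) (by omega)
        rw [Walk.getVert_zero] at this
        have h1 : p.getVert 1 = b := by rw [← hl]; exact p.getVert_length
        exact hnadj (h1 ▸ this)
    · exact h
  refine ⟨p, hpath, hpP, hlen2, ?_⟩
  intro i j hi hj hadj
  by_contra hcon
  push_neg at hcon
  obtain ⟨h1, h2⟩ := hcon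
  -- wlog i < j
  have key : ∀ i j : ℕ, i ≤ p.length → j ≤ p.length → G.Adj (p.getVert i) (p.getVert j) →
      i + 1 < j → False := by
    intro i j hi hj hadj hij
    have w' : G.Walk a b := (takeW p i).append (.cons hadj (dropW p j))
    have hlen : ((takeW p i).append (.cons hadj (dropW p j))).length =
        i + 1 + (p.length - j) := by
      rw [Walk.length_append, Walk.length_cons, length_takeW, length_dropW]
      have : min i p.length = i := by omega
      omega
    have hsup : ∀ z ∈ ((takeW p i).append (.cons hadj (dropW p j))).support, z ∈ P := by
      intro z hz
      rcases (Walk.mem_support_append_iff _ _).1 hz with h | h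
      · exact hpP z (support_takeW p i z h)
      · rcases List.mem_cons.1 (by simpa using h) with rfl | h
        · exact hpP _ (getVert_mem_support' p i)
        · exact hpP z (support_dropW p j z h)
    have := hmin' _ hsup
    rw [hlen] at this
    omega
  have hne' : i ≠ j := by
    rintro rfl; exact G.loopless.irrefl _ hadj
  rcases lt_trichotomy i j with h | h | h
  · exact key i j hi hj hadj (by omega)
  · exact hne' h
  · exact key j i hj hi hadj.symm (by omega)


open SimpleGraph
variable {V : Type*} {G : SimpleGraph V}



/-- rerouting a walk through a clique boundary -/
lemma shortcut {W Wp T Tp : Set V} (hWpW : Wp ⊆ W) (hTWp : T ⊆ Wp)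
    (hclique : ∀ a ∈ T, ∀ b ∈ T, a ≠ b → G.Adj a b)
    (hbd : ∀ a b, a ∈ Wp → b ∈ W → b ∉ Wp → G.Adj a b → a ∈ T) :
    ∀ {x y : V} (p : G.Walk x y), (∀ z ∈ p.support, z ∈ W \ Tp) → y ∈ Wp →
    ∃ x', ((x ∈ Wp → x' = x) ∧ (x ∉ Wp → x' ∈ T)) ∧
      ∃ q : G.Walk x' y, ∀ z ∈ q.support, z ∈ Wp \ Tp := by
  classical
  intro x₀ y₀ p
  induction p with
  | nil =>
    intro hsup hy
    refine ⟨_, ⟨fun _ => rfl, fun hx => absurd hy hx⟩, .nil, ?_⟩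
    intro z hz
    simp only [Walk.support_nil, List.mem_singleton] at hz
    subst hz
    exact ⟨hy, (hsup _ (by simp)).2⟩
  | @cons x z y h q ih =>
    intro hsup hy
    have hsupq : ∀ w ∈ q.support, w ∈ W \ Tp := fun w hw => hsup w (by simp [hw])
    have hxW : x ∈ W \ Tp := hsup x (by simp)
    obtain ⟨s, ⟨hs1, hs2⟩, q', hq'⟩ := ih hsupq hy
    by_cases hzWp : z ∈ Wp
    · have hsz : s = z := hs1 hzWp
      subst hsz
      by_cases hxWp : x ∈ Wp
      · exact ⟨x, ⟨fun _ => rfl, fun hx => absurd hxWp hx⟩, .cons h q',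
          fun w hw => by
            rcases List.mem_cons.1 (by simpa using hw) with rfl | hw
            · exact ⟨hxWp, hxW.2⟩
            · exact hq' w hw⟩
      · -- entering Wp : z must be in T
        have hzT : s ∈ T := hbd s x hzWp hxW.1 hxWp h.symm
        exact ⟨s, ⟨fun hx => absurd hx hxWp, fun _ => hzT⟩, q', hq'⟩
    · have hsT : s ∈ T := hs2 hzWp
      by_cases hxWp : x ∈ Wp
      · -- exiting Wp : x must be in T
        have hxT : x ∈ T := hbd x z hxWp (hsupq z q.start_mem_support).1 hzWp h
        by_cases hxs : x = s
        · refine ⟨x, ⟨fun _ => rfl, fun hx => absurd hxWp hx⟩, hxs ▸ q', ?_⟩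
          subst hxs; exact hq'
        · refine ⟨x, ⟨fun _ => rfl, fun hx => absurd hxWp hx⟩,
            .cons (hclique x hxT s hsT hxs) q', ?_⟩
          intro w hw
          rcases List.mem_cons.1 (by simpa using hw) with rfl | hw
          · exact ⟨hxWp, hxW.2⟩
          · exact hq' w hw
      · exact ⟨s, ⟨fun hx => absurd hx hxWp, fun _ => hsT⟩, q', hq'⟩

/-- a walk between two distinct non-adjacent vertices cannot stay inside the pair -/
lemma no_walk_pair {x y : V} (hxy : x ≠ y) (hnadj : ¬ G.Adj x y) (p : G.Walk x y)
    (hp : ∀ z ∈ p.support, z ∈ ({x, y} : Set V)) : False := by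
  cases p with
  | nil => exact hxy rfl
  | cons h q =>
    rename_i z
    have hz : z ∈ ({x, y} : Set V) := hp z (by simp [q.start_mem_support])
    rcases hz with rfl | rfl
    · exact G.loopless.irrefl _ h
    · exact hnadj h

/-- from reachability in an induced subgraph to a walk with support condition -/
lemma conn_of_induce_reachable {s : Set V} {a b : s} (h : (G.induce s).Reachable a b) :
    Conn G s a b := by
  obtain ⟨p⟩ := h
  induction p with
  | nil => exact ⟨.nil, by simp⟩
  | @cons u w _ h q ih =>
    obtain ⟨q', hq'⟩ := ih
    have hadj : G.Adj u w := h
    refine ⟨.cons hadj q', ?_⟩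
    intro z hz
    rcases List.mem_cons.1 (by simpa using hz) with rfl | hz
    · exact u.2
    · exact hq' z hz


open SimpleGraph

def IsChordal' {V : Type*} (G : SimpleGraph V) : Prop :=
  ∀ n : ℕ, 4 ≤ n → IsEmpty (SimpleGraph.cycleGraph n ↪g G)

variable {V : Type*} {G : SimpleGraph V}

lemma not_cycle (hch : IsChordal' G) {n : ℕ} (hn : 4 ≤ n) (g : ℕ → V)
    (hadj : ∀ i, i < n → G.Adj (g i) (g ((i + 1) % n)))
    (hinj : ∀ i j, i < n → j < n → g i = g j → i = j)
    (hchord : ∀ i j, i < n → j < n → G.Adj (g i) (g j) →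
      (i + 1) % n = j ∨ (j + 1) % n = i) : False := by
  obtain ⟨N, rfl⟩ : ∃ N, n = N + 2 := ⟨n - 2, by omega⟩
  set n := N + 2
  have hsub : ∀ u v : Fin n, (v - u = 1) ↔ v.val = (u.val + 1) % n := by
    intro u v
    constructor
    · intro h
      have : v = u + 1 := by
        have := congrArg (· + u) h
        simpa [sub_add_cancel, add_comm] using this
      rw [this, Fin.add_def]
      simp [Fin.val_one]
    · intro h
      have : v = u + 1 := by
        apply Fin.ext
        rw [h, Fin.add_def]
        simp [Fin.val_one]
      rw [this]
      simp
  refine (hch n hn).false ⟨⟨fun i => g i.val, ?_⟩, ?_⟩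
  · intro i j hij
    exact Fin.ext (hinj i.val j.val i.isLt j.isLt hij)
  · intro u v
    show G.Adj (g u.val) (g v.val) ↔ (cycleGraph n).Adj u v
    rw [cycleGraph_adj]
    constructor
    · intro h
      rcases hchord u.val v.val u.isLt v.isLt h with h' | h'
      · right
        rw [hsub]
        exact h'.symm
      · left
        rw [hsub]
        exact h'.symm
    · rintro (h | h)
      · rw [hsub] at h
        have := hadj v.val v.isLt
        rw [← h] at this
        exact this.symm
      · rw [hsub] at h
        have := hadj u.val u.isLt
        rw [← h] at this
        exact this

lemma no_two_induced_paths (hch : IsChordal' G) {A B : Set V} {a b : V}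
    (hAB : ∀ x ∈ A, ∀ y ∈ B, ¬ G.Adj x y ∧ x ≠ y)
    (haA : a ∉ A) (haB : a ∉ B) (hbA : b ∉ A) (hbB : b ∉ B)
    (hab : a ≠ b) (hnadj : ¬ G.Adj a b)
    (hcA : ∃ w : G.Walk a b, ∀ z ∈ w.support, z ∈ insert a (insert b A))
    (hcB : ∃ w : G.Walk a b, ∀ z ∈ w.support, z ∈ insert a (insert b B)) : False := by
  obtain ⟨pA, hpathA, hsupA, hkA, chordA⟩ := exists_induced_path hab hnadj hcA
  obtain ⟨pB, hpathB, hsupB, hkB, chordB⟩ := exists_induced_path hab hnadj hcB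
  set k := pA.length with hk
  set m := pB.length with hm
  set n := k + m with hn
  have injA : ∀ {i j : ℕ}, i ≤ k → j ≤ k → pA.getVert i = pA.getVert j → i = j :=
    fun hi hj h => IsPath.getVert_inj hpathA hi hj h
  have injB : ∀ {i j : ℕ}, i ≤ m → j ≤ m → pB.getVert i = pB.getVert j → i = j :=
    fun hi hj h => IsPath.getVert_inj hpathB hi hj h
  have endA0 : pA.getVert 0 = a := pA.getVert_zero
  have endAk : pA.getVert k = b := pA.getVert_length
  have endB0 : pB.getVert 0 = a := pB.getVert_zero
  have endBm : pB.getVert m = b := pB.getVert_length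
  have intA : ∀ i, 0 < i → i < k → pA.getVert i ∈ A := by
    intro i h0 hik
    have hmem := hsupA _ (getVert_mem_support' pA i)
    rcases hmem with h | h | h
    · exact absurd (injA (by omega) (by omega) (h.trans endA0.symm)) (by omega)
    · exact absurd (injA (by omega) le_rfl (h.trans endAk.symm)) (by omega)
    · exact h
  have intB : ∀ i, 0 < i → i < m → pB.getVert i ∈ B := by
    intro i h0 him
    have hmem := hsupB _ (getVert_mem_support' pB i)
    rcases hmem with h | h | h
    · exact absurd (injB (by omega) (by omega) (h.trans endB0.symm)) (by omega)
    · exact absurd (injB (by omega) le_rfl (h.trans endBm.symm)) (by omega)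
    · exact h
  set g : ℕ → V := fun i => if i ≤ k then pA.getVert i else pB.getVert (n - i) with hg
  have hgA : ∀ i, i ≤ k → g i = pA.getVert i := fun i hi => by simp [hg, hi]
  have hgB : ∀ i, k < i → g i = pB.getVert (n - i) := fun i hi => by
    simp [hg, Nat.not_le.mpr hi]
  have hinj : ∀ i j, i < n → j < n → g i = g j → i = j := by
    have key : ∀ i j, i ≤ k → k < j → j < n → g i ≠ g j := by
      intro i j hi hj1 hj2
      rw [hgA i hi, hgB j hj1]
      have hnj1 : 1 ≤ n - j := by omega
      have hnj2 : n - j ≤ m - 1 := by omega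
      rcases Nat.eq_zero_or_pos i with rfl | hi0
      · intro h
        rw [endA0] at h
        have h' : pB.getVert 0 = pB.getVert (n - j) := endB0.trans h
        exact absurd (injB (by omega) (by omega) h') (by omega)
      · rcases eq_or_lt_of_le hi with rfl | hik
        · intro h
          rw [endAk] at h
          have h' : pB.getVert m = pB.getVert (n - j) := endBm.trans h
          exact absurd (injB le_rfl (by omega) h') (by omega)
        · intro h
          exact (hAB _ (intA i hi0 hik) _ (intB (n - j) (by omega) (by omega))).2 h
    intro i j hi hj hgij
    by_cases hik : i ≤ k <;> by_cases hjk : j ≤ k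
    · exact injA (by omega) (by omega) (by rwa [hgA i hik, hgA j hjk] at hgij)
    · exact absurd hgij (key i j hik (by omega) hj)
    · exact absurd hgij.symm (key j i hjk (by omega) hi)
    · rw [hgB i (by omega), hgB j (by omega)] at hgij
      have := injB (i := n - i) (j := n - j) (by omega) (by omega) hgij
      omega
  have hadj : ∀ i, i < n → G.Adj (g i) (g ((i + 1) % n)) := by
    intro i hi
    by_cases hik : i < k
    · have h1 : (i + 1) % n = i + 1 := Nat.mod_eq_of_lt (by omega)
      rw [h1, hgA i (by omega), hgA (i + 1) (by omega)]
      exact pA.adj_getVert_succ hik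
    · rcases eq_or_lt_of_le (Nat.not_lt.mp hik) with rfl | hki
      · -- i = k
        have h1 : (k + 1) % n = k + 1 := Nat.mod_eq_of_lt (by omega)
        rw [h1, hgA k le_rfl, hgB (k + 1) (by omega)]
        have e : n - (k + 1) = m - 1 := by omega
        rw [e, endAk]
        have := pB.adj_getVert_succ (i := m - 1) (by omega)
        have e2 : m - 1 + 1 = m := by omega
        rw [e2, endBm] at this
        exact this.symm
      · by_cases hlast : i = n - 1
        · subst hlast
          have h1 : (n - 1 + 1) % n = 0 := by
            have : n - 1 + 1 = n := by omega
            rw [this, Nat.mod_self]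
          rw [h1, hgB (n - 1) (by omega), hgA 0 (by omega)]
          have e : n - (n - 1) = 1 := by omega
          rw [e, endA0]
          have := pB.adj_getVert_succ (i := 0) (by omega)
          rw [pB.getVert_zero] at this
          exact this.symm
        · have h1 : (i + 1) % n = i + 1 := Nat.mod_eq_of_lt (by omega)
          rw [h1, hgB i (by omega), hgB (i + 1) (by omega)]
          have := pB.adj_getVert_succ (i := n - (i + 1)) (by omega)
          have e2 : n - (i + 1) + 1 = n - i := by omega
          rw [e2] at this
          exact this.symm
  have hchord : ∀ i j, i < n → j < n → G.Adj (g i) (g j) →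
      (i + 1) % n = j ∨ (j + 1) % n = i := by
    have cross : ∀ i j, i ≤ k → k < j → j < n → G.Adj (g i) (g j) →
        (i + 1) % n = j ∨ (j + 1) % n = i := by
      intro i j hi hj1 hj2 hadj'
      rw [hgA i hi, hgB j hj1] at hadj'
      rcases Nat.eq_zero_or_pos i with rfl | hi0
      · rw [endA0] at hadj'
        have hadj'' : G.Adj (pB.getVert 0) (pB.getVert (n - j)) := by
          rw [endB0]; exact hadj'
        rcases chordB 0 (n - j) (by omega) (by omega) hadj'' with h | h
        · -- n - j = 1, so j = n - 1
          right
          have : j = n - 1 := by omega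
          subst this
          have : n - 1 + 1 = n := by omega
          rw [this, Nat.mod_self]
        · omega
      · rcases eq_or_lt_of_le hi with rfl | hik
        · rw [endAk] at hadj'
          have hadj'' : G.Adj (pB.getVert m) (pB.getVert (n - j)) := by
            rw [endBm]; exact hadj'
          rcases chordB m (n - j) le_rfl (by omega) hadj'' with h | h
          · omega
          · left
            have : j = k + 1 := by omega
            rw [this, Nat.mod_eq_of_lt (by omega)]
        · exact absurd hadj'
            (hAB _ (intA i hi0 hik) _ (intB (n - j) (by omega) (by omega))).1
    intro i j hi hj hadj'
    by_cases hik : i ≤ k <;> by_cases hjk : j ≤ k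
    · rw [hgA i hik, hgA j hjk] at hadj'
      rcases chordA i j hik hjk hadj' with h | h
      · left; rw [h, Nat.mod_eq_of_lt (by omega)]
      · right; rw [h, Nat.mod_eq_of_lt (by omega)]
    · exact cross i j hik (by omega) hj hadj'
    · exact (cross j i hjk (by omega) hi hadj'.symm).symm
    · rw [hgB i (by omega), hgB j (by omega)] at hadj'
      rcases chordB (n - i) (n - j) (by omega) (by omega) hadj' with h | h
      · right
        have : i = j + 1 := by omega
        rw [← this, Nat.mod_eq_of_lt (by omega)]
      · left
        have : j = i + 1 := by omega
        rw [← this, Nat.mod_eq_of_lt (by omega)]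
  exact not_cycle hch (by omega) g hadj hinj hchord

def Good (G : SimpleGraph V) (d : ℕ) (W : Set V) : Prop :=
  d + 1 ≤ W.ncard ∧
    ∀ T : Set V, T.ncard < d → ∀ x y, x ∈ W \ T → y ∈ W \ T → Conn G (W \ T) x y

lemma neighbor_in_comp {W T : Set V} {t c c' : V} (ht : t ∈ T) (hc : c ∉ T)
    (hsep : ¬ Conn G (W \ T) c c') (hmin : Conn G (W \ (T \ {t})) c c') :
    ∃ z, Conn G (W \ T) c z ∧ G.Adj t z := by
  classical
  obtain ⟨p, hp⟩ := hmin
  have htp : t ∈ p.support := by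
    by_contra hts
    refine hsep ⟨p, fun z hz => ⟨(hp z hz).1, fun hzT => ?_⟩⟩
    have := (hp z hz).2
    simp only [Set.mem_diff, Set.mem_singleton_iff, not_and, not_not] at this
    exact hts ((this hzT) ▸ hz)
  set p₁ := p.takeUntil t htp with hp₁
  set r := p₁.reverse with hr
  have htc : t ≠ c := fun h => hc (h ▸ ht)
  have hnil : ¬ r.Nil := SimpleGraph.Walk.not_nil_of_ne htc
  have hcount : r.support.count t = 1 := by
    rw [hr, SimpleGraph.Walk.support_reverse, List.count_reverse]
    exact p.count_support_takeUntil_eq_one htp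
  have hsupR : ∀ z ∈ r.support, z ∈ W \ (T \ {t}) := by
    intro z hz
    rw [hr, SimpleGraph.Walk.support_reverse, List.mem_reverse] at hz
    exact hp z (p.support_takeUntil_subset htp hz)
  have htail : ∀ z ∈ r.support.tail, z ∈ W \ T := by
    intro z hz
    have hzmem : z ∈ r.support := by
      rw [r.support_eq_cons]; exact List.mem_cons_of_mem _ hz
    have hzt : z ≠ t := by
      intro h
      subst h
      have h1 : r.support.count z = r.support.tail.count z + 1 := by
        conv_lhs => rw [r.support_eq_cons]
        exact List.count_cons_self
      rw [hcount] at h1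
      have h0 : r.support.tail.count z = 0 := by omega
      exact (List.count_eq_zero.mp h0) hz
    have := hsupR z hzmem
    refine ⟨this.1, fun hzT => ?_⟩
    simp only [Set.mem_diff, Set.mem_singleton_iff, not_and, not_not] at this
    exact hzt (this.2 hzT)
  refine ⟨r.getVert 1, ⟨r.tail.reverse, ?_⟩, r.adj_snd hnil⟩
  intro z hz
  rw [SimpleGraph.Walk.support_reverse, List.mem_reverse,
    SimpleGraph.Walk.support_tail_of_not_nil _ hnil] at hz
  exact htail z hz

lemma decomp [Fintype V] (hch : IsChordal' G) {d : ℕ} {W : Set V} (hg : Good G d W)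
    {x0 y0 : V} (hx0 : x0 ∈ W) (hy0 : y0 ∈ W) (hne : x0 ≠ y0) (hnadj : ¬ G.Adj x0 y0) :
    ∃ W₁ W₂ : Set V, W₁ ⊆ W ∧ W₂ ⊆ W ∧ W₁ ∪ W₂ = W ∧ W₁ ≠ W ∧ W₂ ≠ W ∧
      d ≤ (W₁ ∩ W₂).ncard ∧ Good G d W₁ ∧ Good G d W₂ ∧
      (∀ u v, u ∈ W → v ∈ W → G.Adj u v →
        (u ∈ W₁ ∧ v ∈ W₁) ∨ (u ∈ W₂ ∧ v ∈ W₂)) := by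
  classical
  set SS : Set ℕ :=
    {n | ∃ T : Set V, T ⊆ W \ {x0, y0} ∧ ¬ Conn G (W \ T) x0 y0 ∧ T.ncard = n} with hSS
  have hSSne : SS.Nonempty := by
    refine ⟨(W \ {x0, y0}).ncard, W \ {x0, y0}, le_refl _, ?_, rfl⟩
    rintro ⟨p, hp⟩
    refine no_walk_pair hne hnadj p (fun z hz => ?_)
    rcases hp z hz with ⟨hzW, hz2⟩
    by_contra hz3
    exact hz2 ⟨hzW, hz3⟩
  obtain ⟨T, hTsub, hTsep, hTcard⟩ := Nat.sInf_mem hSSne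
  have hTmin : ∀ T' : Set V, T' ⊆ W \ {x0, y0} → ¬ Conn G (W \ T') x0 y0 →
      T.ncard ≤ T'.ncard := by
    intro T' h1 h2
    rw [hTcard]
    exact Nat.sInf_le ⟨T', h1, h2, rfl⟩
  have hx0T : x0 ∉ T := fun h => (hTsub h).2 (by simp)
  have hy0T : y0 ∉ T := fun h => (hTsub h).2 (by simp)
  have hTW : T ⊆ W := fun z hz => (hTsub hz).1
  have hTd : d ≤ T.ncard := by
    by_contra h
    exact hTsep (hg.2 T (by omega) x0 y0 ⟨hx0, hx0T⟩ ⟨hy0, hy0T⟩)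
  set A : Set V := {z | Conn G (W \ T) x0 z} with hA
  set B : Set V := {z | Conn G (W \ T) y0 z} with hB
  have hx0A : x0 ∈ A := Conn.refl ⟨hx0, hx0T⟩
  have hy0B : y0 ∈ B := Conn.refl ⟨hy0, hy0T⟩
  have hAWT : A ⊆ W \ T := fun z hz => Conn.mem_right hz
  have hBWT : B ⊆ W \ T := fun z hz => Conn.mem_right hz
  have hABdisj : ∀ z, z ∈ A → z ∈ B → False := fun z h1 h2 => hTsep (h1.trans h2.symm)
  have hAclosed : ∀ z w, z ∈ A → G.Adj z w → w ∈ W \ T → w ∈ A :=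
    fun z w h1 h2 h3 => Conn.adj_right h1 h2 h3
  have hBclosed : ∀ z w, z ∈ B → G.Adj z w → w ∈ W \ T → w ∈ B :=
    fun z w h1 h2 h3 => Conn.adj_right h1 h2 h3
  have hABedge : ∀ za ∈ A, ∀ zb ∈ B, ¬ G.Adj za zb ∧ za ≠ zb := by
    intro za ha zb hb
    constructor
    · intro h
      exact hABdisj zb (hAclosed za zb ha h (hBWT hb)) hb
    · rintro rfl
      exact hABdisj za ha hb
  have hy0A : y0 ∉ A := fun h => hTsep h
  have hx0B : x0 ∉ B := fun h => hTsep h.symm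
  have hnbr : ∀ t ∈ T, (∃ z ∈ A, G.Adj t z) ∧ (∃ z ∈ B, G.Adj t z) := by
    intro t ht
    have hminlt : (T \ {t}).ncard < T.ncard :=
      Set.ncard_diff_singleton_lt_of_mem ht (Set.toFinite T)
    have hsub' : T \ {t} ⊆ W \ {x0, y0} := Set.diff_subset.trans hTsub
    have hconn' : Conn G (W \ (T \ {t})) x0 y0 := by
      by_contra h
      exact absurd (hTmin _ hsub' h) (by omega)
    constructor
    · obtain ⟨z, hz1, hz2⟩ := neighbor_in_comp ht hx0T hTsep hconn'
      exact ⟨z, hz1, hz2⟩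
    · obtain ⟨z, hz1, hz2⟩ := neighbor_in_comp ht hy0T
        (fun h => hTsep h.symm) hconn'.symm
      exact ⟨z, hz1, hz2⟩
  have hclique : ∀ a ∈ T, ∀ b ∈ T, a ≠ b → G.Adj a b := by
    intro a ha b hb hab
    by_contra hnadj'
    obtain ⟨⟨a1, ha1A, ha1⟩, ⟨a2, ha2B, ha2⟩⟩ := hnbr a ha
    obtain ⟨⟨b1, hb1A, hb1⟩, ⟨b2, hb2B, hb2⟩⟩ := hnbr b hb
    have haA : a ∉ A := fun h => (hAWT h).2 ha
    have haB : a ∉ B := fun h => (hBWT h).2 ha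
    have hbA : b ∉ A := fun h => (hAWT h).2 hb
    have hbB : b ∉ B := fun h => (hBWT h).2 hb
    have hConnA : Conn G A a1 b1 := (conn_self ha1A).symm.trans (conn_self hb1A)
    have hConnB : Conn G B a2 b2 := by
      have h1 : Conn G {w | Conn G (W \ T) y0 w} y0 a2 := conn_self ha2B
      have h2 : Conn G {w | Conn G (W \ T) y0 w} y0 b2 := conn_self hb2B
      exact h1.symm.trans h2
    have hcA : Conn G (insert a (insert b A)) a b := by
      refine Conn.cons_left (by simp) ha1 ?_
      refine Conn.adj_right (hConnA.mono ?_) hb1.symm (by simp)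
      intro z hz
      exact Set.mem_insert_of_mem _ (Set.mem_insert_of_mem _ hz)
    have hcB : Conn G (insert a (insert b B)) a b := by
      refine Conn.cons_left (by simp) ha2 ?_
      refine Conn.adj_right (hConnB.mono ?_) hb2.symm (by simp)
      intro z hz
      exact Set.mem_insert_of_mem _ (Set.mem_insert_of_mem _ hz)
    exact no_two_induced_paths hch hABedge haA haB hbA hbB hab hnadj' hcA hcB
  -- the two pieces
  set W₁ : Set V := A ∪ T with hW₁
  set W₂ : Set V := W \ A with hW₂
  have hW₁W : W₁ ⊆ W := by
    intro z hz
    rcases hz with hz | hz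
    · exact (hAWT hz).1
    · exact hTW hz
  have hW₂W : W₂ ⊆ W := Set.diff_subset
  have hTW₁ : T ⊆ W₁ := Set.subset_union_right
  have hTW₂ : T ⊆ W₂ := fun z hz => ⟨hTW hz, fun hzA => (hAWT hzA).2 hz⟩
  have hbd₁ : ∀ a b, a ∈ W₁ → b ∈ W → b ∉ W₁ → G.Adj a b → a ∈ T := by
    intro a b haW₁ hbW hbW₁ hadj
    rcases haW₁ with haA | haT
    · exfalso
      have hbT : b ∉ T := fun h => hbW₁ (Or.inr h)
      exact hbW₁ (Or.inl (hAclosed a b haA hadj ⟨hbW, hbT⟩))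
    · exact haT
  have hbd₂ : ∀ a b, a ∈ W₂ → b ∈ W → b ∉ W₂ → G.Adj a b → a ∈ T := by
    intro a b haW₂ hbW hbW₂ hadj
    have hbA : b ∈ A := by
      by_contra h
      exact hbW₂ ⟨hbW, h⟩
    by_contra haT
    exact haW₂.2 (hAclosed b a hbA hadj.symm ⟨haW₂.1, haT⟩)
  have hGood₁ : Good G d W₁ := by
    constructor
    · have hdisj : Disjoint A T := Set.disjoint_left.mpr (fun z hz => (hAWT hz).2)
      rw [hW₁, Set.ncard_union_eq hdisj (Set.toFinite A) (Set.toFinite T)]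
      have hApos : 0 < A.ncard := (Set.ncard_pos (Set.toFinite A)).mpr ⟨x0, hx0A⟩
      omega
    · intro T' hT' x y hx hy
      obtain ⟨p, hp⟩ := hg.2 T' hT' x y ⟨hW₁W hx.1, hx.2⟩ ⟨hW₁W hy.1, hy.2⟩
      obtain ⟨x', ⟨hx'1, _⟩, q, hq⟩ :=
        shortcut hW₁W hTW₁ hclique hbd₁ p (fun z hz => hp z hz) hy.1
      have hxx : x' = x := hx'1 hx.1
      subst hxx
      exact ⟨q, hq⟩
  have hGood₂ : Good G d W₂ := by
    constructor
    · have hsub : insert y0 T ⊆ W₂ := by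
        intro z hz
        rcases hz with rfl | hz
        · exact ⟨hy0, hy0A⟩
        · exact hTW₂ hz
      have h1 : (insert y0 T).ncard = T.ncard + 1 :=
        Set.ncard_insert_of_notMem hy0T (Set.toFinite T)
      have h2 := Set.ncard_le_ncard hsub (Set.toFinite W₂)
      omega
    · intro T' hT' x y hx hy
      obtain ⟨p, hp⟩ := hg.2 T' hT' x y ⟨hW₂W hx.1, hx.2⟩ ⟨hW₂W hy.1, hy.2⟩
      obtain ⟨x', ⟨hx'1, _⟩, q, hq⟩ :=
        shortcut hW₂W hTW₂ hclique hbd₂ p (fun z hz => hp z hz) hy.1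
      have hxx : x' = x := hx'1 hx.1
      subst hxx
      exact ⟨q, hq⟩
  refine ⟨W₁, W₂, hW₁W, hW₂W, ?_, ?_, ?_, ?_, hGood₁, hGood₂, ?_⟩
  · apply Set.eq_of_subset_of_subset
    · intro z hz
      rcases hz with hz | hz
      exacts [hW₁W hz, hW₂W hz]
    · intro z hz
      by_cases hzA : z ∈ A
      · exact Or.inl (Or.inl hzA)
      · exact Or.inr ⟨hz, hzA⟩
  · intro h
    have : y0 ∈ W₁ := h ▸ hy0
    rcases this with h' | h'
    exacts [hy0A h', hy0T h']
  · intro h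
    have : x0 ∈ W₂ := h ▸ hx0
    exact this.2 hx0A
  · have : W₁ ∩ W₂ = T := by
      apply Set.eq_of_subset_of_subset
      · rintro z ⟨hz1, hz2⟩
        rcases hz1 with hz | hz
        · exact absurd hz hz2.2
        · exact hz
      · intro z hz
        exact ⟨Or.inr hz, hTW₂ hz⟩
    rw [this]
    exact hTd
  · intro u v hu hv hadj
    by_cases huA : u ∈ A
    · left
      refine ⟨Or.inl huA, ?_⟩
      by_cases hvT : v ∈ T
      · exact Or.inr hvT
      · exact Or.inl (hAclosed u v huA hadj ⟨hv, hvT⟩)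
    · by_cases hvA : v ∈ A
      · left
        refine ⟨?_, Or.inl hvA⟩
        by_cases huT : u ∈ T
        · exact Or.inr huT
        · exact absurd (hAclosed v u hvA hadj.symm ⟨hu, huT⟩) huA
      · exact Or.inr ⟨⟨hu, huA⟩, ⟨hv, hvA⟩⟩

lemma master [Fintype V] (G : SimpleGraph V) (hch : IsChordal' G) (d : ℕ) :
    ∀ n (W : Set V), W.ncard = n → Good G d W →
      GluingConstr G d ((⊤ : G.Subgraph).induce W) := by
  intro n
  induction n using Nat.strong_induction_on with
  | _ n ih =>
    intro W hn hg
    by_cases hcomp : ∀ x ∈ W, ∀ y ∈ W, x ≠ y → G.Adj x y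
    · refine GluingConstr.base _ ?_ ?_
      · simpa using hg.1
      · intro p _ q hq a b
        by_cases hab : a = b
        · subst hab; simp
        · refine hq a b ?_
          rw [SimpleGraph.Subgraph.coe_adj]
          simp only [SimpleGraph.Subgraph.induce_adj, SimpleGraph.Subgraph.top_adj]
          refine ⟨a.2, b.2, hcomp a a.2 b b.2 (fun h => hab (Subtype.ext h))⟩
    · push_neg at hcomp
      obtain ⟨x0, hx0, y0, hy0, hne, hnadj⟩ := hcomp
      obtain ⟨W₁, W₂, h1, h2, hunion, hne1, hne2, hcard, hg1, hg2, hsplit⟩ :=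
        decomp hch hg hx0 hy0 hne hnadj
      have hlt1 : W₁.ncard < n :=
        hn ▸ Set.ncard_lt_ncard (ssubset_of_subset_of_ne h1 hne1) (Set.toFinite W)
      have hlt2 : W₂.ncard < n :=
        hn ▸ Set.ncard_lt_ncard (ssubset_of_subset_of_ne h2 hne2) (Set.toFinite W)
      have hc1 := ih _ hlt1 W₁ rfl hg1
      have hc2 := ih _ hlt2 W₂ rfl hg2
      have hglue := GluingConstr.glue _ _ hc1 hc2 ?_ ?_ ?_
      rotate_left
      · simp only [SimpleGraph.Subgraph.induce_verts, SimpleGraph.Subgraph.verts_sup]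
        rw [hunion]
        exact hne1
      · simp only [SimpleGraph.Subgraph.induce_verts, SimpleGraph.Subgraph.verts_sup]
        rw [hunion]
        exact hne2
      · simpa using hcard
      have heq : (⊤ : G.Subgraph).induce W₁ ⊔ (⊤ : G.Subgraph).induce W₂ =
          (⊤ : G.Subgraph).induce W := by
        refine SimpleGraph.Subgraph.ext ?_ ?_
        · simpa using hunion
        · ext u v
          simp only [SimpleGraph.Subgraph.sup_adj, SimpleGraph.Subgraph.induce_adj,
            SimpleGraph.Subgraph.top_adj]
          constructor
          · rintro (⟨hu, hv, h⟩ | ⟨hu, hv, h⟩)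
            · exact ⟨h1 hu, h1 hv, h⟩
            · exact ⟨h2 hu, h2 hv, h⟩
          · rintro ⟨hu, hv, h⟩
            rcases hsplit u v hu hv h with ⟨ha, hb⟩ | ⟨ha, hb⟩
            · exact Or.inl ⟨ha, hb, h⟩
            · exact Or.inr ⟨ha, hb, h⟩
      rwa [heq] at hglue

end Stmt16Aux

theorem stmt16 [Fintype V] (G : SimpleGraph V) (d : ℕ)
    (hconn : dConnected G d) (hchordal : IsChordal G)
    (hcard : d + 1 ≤ Fintype.card V) :
    GluingConstr G d ⊤ := by
  classical
  have hgood : Stmt16Aux.Good G d Set.univ := by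
    constructor
    · rwa [Set.ncard_univ, Nat.card_eq_fintype_card]
    · intro T hT x y hx hy
      have hns := hconn.2 T hT
      unfold IsSeparator at hns
      push_neg at hns
      obtain ⟨hu, hv, hr⟩ := hns x y hx.2 hy.2
      have hc := Stmt16Aux.conn_of_induce_reachable hr
      refine hc.mono ?_
      intro z hz
      exact ⟨trivial, hz⟩
  have h := Stmt16Aux.master G hchordal d Set.univ.ncard Set.univ rfl hgood
  have heq : (⊤ : G.Subgraph).induce Set.univ = ⊤ := by
    refine SimpleGraph.Subgraph.ext ?_ ?_
    · simp
    · ext u v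
      simp [SimpleGraph.Subgraph.induce_adj]
  rwa [heq] at h
end
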